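/- arXiv:2302.04925 — 6 statements merged into one kernel-verified Lean document; each statement's English description precedes it below -/
import Mathlib

section
/- (Fingerprinting Lemma) Let P be uniformly distributed on the interval [−1/3, 1/3], and, conditionally on P = p, let X_1, …, X_m be i.i.d. random variables taking values in {−1, +1} with E[X_i] = p. Then for every function f : {±1}^m → [−1/3, 1/3]: E[ ((1 − 9P²)/(9 − 9P²)) · (f(X_{1:m}) − P) · Σ_{i=1}^m (X_i − P) + (f(X_{1:m}) − P)² ] ≥ 1/27, where the expectation is over P and X_{1:m}. -/
/-!
Statement 4 (Fingerprinting Lemma, Kamath et al.): let `P ∼ U[−1/3,1/3]` and,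
conditionally on `P = p`, let `X_1,…,X_m` be i.i.d. `±1`-valued with mean `p`.
Then for every `f : {±1}^m → [−1/3,1/3]`,
`E[ (1−9P²)/(9−9P²) · (f(X)−P) · Σᵢ(Xᵢ−P) + (f(X)−P)² ] ≥ 1/27`.

The expectation is written explicitly: the uniform density on `[−1/3,1/3]` is `3/2`,
`±1`-valued variables are encoded by `Bool` via `pm1`, and conditionally on `p` the
probability of the outcome `x : Fin m → Bool` is `∏ i, (1 + pm1 (x i) * p)/2`.
-/

open Finset Real

noncomputable section

/-- Encoding of `Bool` as `±1 ∈ ℝ`. -/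
def pm1 (b : Bool) : ℝ := if b then 1 else -1

def mu (m : ℕ) (x : Fin m → Bool) (p : ℝ) : ℝ := ∏ i, (1 + pm1 (x i) * p) / 2

def mu' (m : ℕ) (x : Fin m → Bool) (p : ℝ) : ℝ :=
  ∑ i, (∏ j ∈ Finset.univ.erase i, (1 + pm1 (x j) * p) / 2) * (pm1 (x i) / 2)

lemma pm1_sq (b : Bool) : pm1 b ^ 2 = 1 := by cases b <;> simp [pm1]

lemma hasDerivAt_mu (m : ℕ) (x : Fin m → Bool) (p : ℝ) :
    HasDerivAt (mu m x) (mu' m x p) p := by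
  have h : ∀ i ∈ (Finset.univ : Finset (Fin m)),
      HasDerivAt (fun q : ℝ => (1 + pm1 (x i) * q) / 2) (pm1 (x i) / 2) p := by
    intro i _
    have := ((hasDerivAt_id p).const_mul (pm1 (x i))).const_add (1 : ℝ)
    simpa using this.div_const 2
  have h2 := HasDerivAt.fun_finsetProd h
  simp only [smul_eq_mul] at h2
  exact h2

lemma continuous_mu (m : ℕ) (x : Fin m → Bool) : Continuous (mu m x) := by
  apply continuous_finset_prod
  intro i _
  fun_prop

lemma continuous_mu' (m : ℕ) (x : Fin m → Bool) : Continuous (mu' m x) := by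
  apply continuous_finset_sum
  intro i _
  apply Continuous.mul _ continuous_const
  apply continuous_finset_prod
  intro j _
  fun_prop

lemma mu_sum_one (m : ℕ) (p : ℝ) : ∑ x : Fin m → Bool, mu m x p = 1 := by
  have h := Finset.prod_univ_sum (fun _ : Fin m => (Finset.univ : Finset Bool))
    (fun _ b => (1 + pm1 b * p) / 2)
  simp only [Fintype.piFinset_univ] at h
  have h2 : (∑ b : Bool, (1 + pm1 b * p) / 2) = 1 := by
    simp [pm1]; ring
  simp only [mu]
  rw [← h, h2]
  simp

lemma mu_nonneg (m : ℕ) (x : Fin m → Bool) (p : ℝ) (h1 : -(1/3) ≤ p) (h2 : p ≤ 1/3) :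
    0 ≤ mu m x p := by
  apply Finset.prod_nonneg
  intro i _
  cases h : x i <;> simp [pm1] <;> linarith

lemma keyA (m : ℕ) (x : Fin m → Bool) (p : ℝ) :
    mu m x p * (∑ i, (pm1 (x i) - p)) = (1 - p ^ 2) * mu' m x p := by
  unfold mu mu'
  rw [Finset.mul_sum, Finset.mul_sum]
  refine Finset.sum_congr rfl fun i _ => ?_
  rw [← Finset.mul_prod_erase Finset.univ _ (Finset.mem_univ i)]
  have hc := pm1_sq (x i)
  set P := ∏ j ∈ Finset.univ.erase i, (1 + pm1 (x j) * p) / 2 with hP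
  linear_combination (P * p / 2) * hc


/-- **Fingerprinting Lemma.** -/
theorem fingerprinting_lemma (m : ℕ) (f : (Fin m → Bool) → ℝ)
    (hf : ∀ x, f x ∈ Set.Icc (-(1 / 3) : ℝ) (1 / 3)) :
    (3 / 2 : ℝ) *
        ∫ p in (-(1 / 3) : ℝ)..(1 / 3),
          ∑ x : Fin m → Bool,
            (∏ i, (1 + pm1 (x i) * p) / 2) *
              ((1 - 9 * p ^ 2) / (9 - 9 * p ^ 2) * (f x - p) * (∑ i, (pm1 (x i) - p)) +
                (f x - p) ^ 2) ≥
      1 / 27 := by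
  classical
  have ha : True := trivial
  -- F and its derivative D, residual R
  set F : ℝ → ℝ := fun p => ∑ x : Fin m → Bool, (1 - 9*p^2)/9 * (f x - p) * mu m x p with hF
  set D : ℝ → ℝ := fun p => ∑ x : Fin m → Bool,
      ((-(2*p) * (f x - p) + (1 - 9*p^2)/9 * (-1)) * mu m x p
        + (1 - 9*p^2)/9 * (f x - p) * mu' m x p) with hD
  set R : ℝ → ℝ := fun p => ∑ x : Fin m → Bool,
      mu m x p * ((f x)^2 - p^2 + (1 - 9*p^2)/9) with hR
  have hFD : ∀ p : ℝ, HasDerivAt F (D p) p := by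
    intro p
    apply HasDerivAt.fun_sum
    intro x _
    have hsq : HasDerivAt (fun q : ℝ => q^2) (2*p) p := by simpa using hasDerivAt_pow 2 p
    have h1 : HasDerivAt (fun q : ℝ => (1 - 9*q^2)/9) (-(2*p)) p := by
      have := ((hsq.const_mul (9:ℝ)).const_sub 1).div_const 9
      exact this.congr_deriv (by ring)
    have h2 : HasDerivAt (fun q : ℝ => f x - q) (-1) p := (hasDerivAt_id p).const_sub (f x)
    exact (h1.mul h2).mul (hasDerivAt_mu m x p)
  have hDcont : Continuous D := by
    apply continuous_finset_sum
    intro x _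
    apply Continuous.add
    · exact (Continuous.add (by fun_prop) (by fun_prop)).mul (continuous_mu m x)
    · exact (Continuous.mul (by fun_prop) (by fun_prop)).mul (continuous_mu' m x)
  have hRcont : Continuous R := by
    apply continuous_finset_sum
    intro x _
    exact (continuous_mu m x).mul (by fun_prop)
  -- pointwise identity on [a, b]
  have hid : ∀ p ∈ Set.uIcc (-(1/3):ℝ) (1/3),
      (∑ x : Fin m → Bool,
        (∏ i, (1 + pm1 (x i) * p) / 2) *
          ((1 - 9 * p ^ 2) / (9 - 9 * p ^ 2) * (f x - p) * (∑ i, (pm1 (x i) - p)) +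
            (f x - p) ^ 2)) = D p + R p := by
    intro p hp
    have hden : (9 - 9*p^2 : ℝ) ≠ 0 := by
      rw [Set.uIcc_of_le (by norm_num : (-(1/3):ℝ) ≤ 1/3)] at hp
      obtain ⟨hp1, hp2⟩ := hp
      nlinarith
    have hq : (1 - 9*p^2)/(9 - 9*p^2) * (1 - p^2) = (1 - 9*p^2)/9 := by
      rw [div_mul_eq_mul_div, div_eq_div_iff hden (by norm_num)]; ring
    simp only [hD, hR, ← Finset.sum_add_distrib]
    refine Finset.sum_congr rfl fun x _ => ?_
    have hA := keyA m x p
    have hmu : (∏ i, (1 + pm1 (x i) * p) / 2) = mu m x p := rfl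
    rw [hmu]
    set S := (∑ i, (pm1 (x i) - p)) with hS
    linear_combination ((1 - 9*p^2)/(9 - 9*p^2) * (f x - p)) * hA
      + ((f x - p) * mu' m x p) * hq
  -- integral manipulation
  have hle : (-(1/3):ℝ) ≤ 1/3 := by norm_num
  have hIeq : (∫ p in(-(1/3):ℝ)..(1/3),
      ∑ x : Fin m → Bool,
        (∏ i, (1 + pm1 (x i) * p) / 2) *
          ((1 - 9 * p ^ 2) / (9 - 9 * p ^ 2) * (f x - p) * (∑ i, (pm1 (x i) - p)) +
            (f x - p) ^ 2)) = (∫ p in(-(1/3):ℝ)..(1/3), D p) + ∫ p in(-(1/3):ℝ)..(1/3), R p := by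
    rw [intervalIntegral.integral_congr hid]
    exact intervalIntegral.integral_add (hDcont.intervalIntegrable (-(1/3):ℝ) (1/3))
      (hRcont.intervalIntegrable (-(1/3):ℝ) (1/3))
  have hID : (∫ p in(-(1/3):ℝ)..(1/3), D p) = 0 := by
    rw [intervalIntegral.integral_eq_sub_of_hasDerivAt (fun p _ => hFD p)
      (hDcont.intervalIntegrable (-(1/3):ℝ) (1/3))]
    have hFz : ∀ p : ℝ, (1 - 9*p^2) = 0 → F p = 0 := by
      intro p hp
      simp only [hF]
      apply Finset.sum_eq_zero
      intro x _
      rw [hp]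
      ring
    rw [hFz (1/3) (by norm_num), hFz (-(1/3)) (by norm_num)]
    ring
  have hbound : ∀ p ∈ Set.Icc (-(1/3):ℝ) (1/3), (1/9 - 2*p^2 : ℝ) ≤ R p := by
    intro p hp
    obtain ⟨hp1, hp2⟩ := hp
    have h1 : R p = (∑ x : Fin m → Bool, mu m x p * (f x)^2)
        + (∑ x : Fin m → Bool, mu m x p) * (-p^2 + (1 - 9*p^2)/9) := by
      simp only [hR]
      rw [Finset.sum_mul, ← Finset.sum_add_distrib]
      refine Finset.sum_congr rfl fun x _ => ?_
      ring
    rw [h1, mu_sum_one]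
    have h2 : 0 ≤ ∑ x : Fin m → Bool, mu m x p * (f x)^2 := by
      apply Finset.sum_nonneg
      intro x _
      exact mul_nonneg (mu_nonneg m x p hp1 hp2) (sq_nonneg _)
    nlinarith
  have hIR : (2/81 : ℝ) ≤ ∫ p in(-(1/3):ℝ)..(1/3), R p := by
    have hpoly : (∫ p in(-(1/3):ℝ)..(1/3), (1/9 - 2*p^2 : ℝ)) = 2/81 := by
      rw [intervalIntegral.integral_sub (f := fun _ => (1/9:ℝ)) (g := fun p : ℝ => 2*p^2) (intervalIntegrable_const)
        (((continuous_const.mul (continuous_pow 2)).intervalIntegrable (-(1/3):ℝ) (1/3)))]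
      simp only [intervalIntegral.integral_const_mul, integral_pow,
        intervalIntegral.integral_const]
      norm_num
    calc (2/81 : ℝ) = ∫ p in(-(1/3):ℝ)..(1/3), (1/9 - 2*p^2 : ℝ) := hpoly.symm
      _ ≤ ∫ p in(-(1/3):ℝ)..(1/3), R p := by
          apply intervalIntegral.integral_mono_on hle
            (((continuous_const.sub (continuous_const.mul (continuous_pow 2))).intervalIntegrable (-(1/3):ℝ) (1/3)))
            (hRcont.intervalIntegrable (-(1/3):ℝ) (1/3))
          exact hbound
  rw [ge_iff_le, hIeq, hID]
  linarith


end
end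

section
/- Let X and Y be discrete random variables on a common probability space with E[X] = 0, E[Y²] ≤ 1, and E[XY] = β > 0, and suppose X is sub-Gaussian with tail bound P(|X| ≥ t) ≤ 2e^{−t²/c²} for all t ≥ 0, for some c ≥ β. Then the mutual information satisfies √(I(X;Y)) ≥ β² / (192√2 · c² · ln(2^20 c²/β²)); in particular I(X;Y) = Ω̃(β⁴/c⁴). -/
/-!
Statement 5 (Lemma 4.2 of the paper): if `X` and `Y` are discrete random variables
with `E[X] = 0`, `E[Y²] ≤ 1`, `E[XY] = β > 0`, and `X` is sub-Gaussian with
`P(|X| ≥ t) ≤ 2exp(−t²/c²)` for some `c ≥ β`, then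
`√(I(X;Y)) ≥ β²/(192√2 · c² · ln(2²⁰ c²/β²))`; in particular `I(X;Y) = Ω̃(β⁴/c⁴)`.
-/

open Finset Real

open scoped Classical

noncomputable section

/-- monotone from derivative on a positive interval -/
lemma mono_aux {f f' : ℝ → ℝ} {a b : ℝ} (ha : 0 < a) (hab : a ≤ b)
    (hderiv : ∀ y ∈ Set.Icc a b, HasDerivAt f (f' y) y)
    (hpos : ∀ y ∈ Set.Icc a b, 0 ≤ f' y) : f a ≤ f b := by
  have h := monotoneOn_of_deriv_nonneg (convex_Icc a b)
    (fun y hy => ((hderiv y hy).continuousAt).continuousWithinAt)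
    (fun y hy => ((hderiv y (interior_subset hy)).differentiableAt).differentiableWithinAt)
    (fun y hy => by
      rw [(hderiv y (interior_subset hy)).deriv]; exact hpos y (interior_subset hy))
  exact h (Set.left_mem_Icc.2 hab) (Set.right_mem_Icc.2 hab) hab

lemma psi_deriv {x : ℝ} (hx : 0 < x) :
    HasDerivAt (fun y => (y + 1) * Real.log y - 2 * (y - 1))
      (Real.log x + (x + 1) * x⁻¹ - 2) x := by
  have h1 : HasDerivAt (fun y : ℝ => (y + 1) * Real.log y)
      (1 * Real.log x + (x + 1) * x⁻¹) x :=
    ((hasDerivAt_id x).add_const 1).mul (Real.hasDerivAt_log hx.ne')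
  have h2 : HasDerivAt (fun y : ℝ => 2 * (y - 1)) 2 x := by
    simpa using ((hasDerivAt_id x).sub_const 1).const_mul 2
  exact (h1.sub h2).congr_deriv (by ring)

lemma psi_nonneg {x : ℝ} (hx : 1 ≤ x) : 0 ≤ (x + 1) * Real.log x - 2 * (x - 1) := by
  have h := mono_aux (f := fun y => (y + 1) * Real.log y - 2 * (y - 1))
    (f' := fun y => Real.log y + (y + 1) * y⁻¹ - 2) one_pos hx
    (fun y hy => psi_deriv (lt_of_lt_of_le one_pos hy.1))
    (fun y hy => by
      have hy0 : (0:ℝ) < y := lt_of_lt_of_le one_pos hy.1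
      have hl : 1 - y⁻¹ ≤ Real.log y := Real.one_sub_inv_le_log_of_pos hy0
      have : (y + 1) * y⁻¹ = 1 + y⁻¹ := by field_simp
      show 0 ≤ Real.log y + (y + 1) * y⁻¹ - 2
      rw [this]; linarith)
  simpa using h

lemma psi_nonpos {x : ℝ} (hx0 : 0 < x) (hx : x ≤ 1) :
    (x + 1) * Real.log x - 2 * (x - 1) ≤ 0 := by
  have h := mono_aux (f := fun y => (y + 1) * Real.log y - 2 * (y - 1))
    (f' := fun y => Real.log y + (y + 1) * y⁻¹ - 2) hx0 hx
    (fun y hy => psi_deriv (lt_of_lt_of_le hx0 hy.1))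
    (fun y hy => by
      have hy0 : (0:ℝ) < y := lt_of_lt_of_le hx0 hy.1
      have hl : 1 - y⁻¹ ≤ Real.log y := Real.one_sub_inv_le_log_of_pos hy0
      have : (y + 1) * y⁻¹ = 1 + y⁻¹ := by field_simp
      show 0 ≤ Real.log y + (y + 1) * y⁻¹ - 2
      rw [this]; linarith)
  simpa using h

lemma phi_deriv {x : ℝ} (hx : 0 < x) :
    HasDerivAt (fun y => (y + 2) * (y * Real.log y - y + 1) - 3 / 2 * (y - 1) ^ 2)
      (2 * ((x + 1) * Real.log x - 2 * (x - 1))) x := by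
  have h1 : HasDerivAt (fun y : ℝ => (y + 2) * (y * Real.log y - y + 1))
      (1 * (x * Real.log x - x + 1) + (x + 2) * ((Real.log x + 1) - 1)) x :=
    ((hasDerivAt_id x).add_const 2).mul
      (((Real.hasDerivAt_mul_log hx.ne').sub (hasDerivAt_id x)).add_const 1)
  have h2 : HasDerivAt (fun y : ℝ => 3 / 2 * (y - 1) ^ 2) (3 / 2 * (2 * (x - 1))) x := by
    have := (((hasDerivAt_id x).sub_const 1).pow 2).const_mul (3 / 2 : ℝ)
    simpa using this
  have h := h1.sub h2
  exact h.congr_deriv (by ring)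

/-- core scalar inequality -/
lemma key_scalar {x : ℝ} (hx : 0 < x) :
    3 / 2 * (x - 1) ^ 2 ≤ (x + 2) * (x * Real.log x - x + 1) := by
  rcases le_total 1 x with h1 | h1
  · have h := mono_aux (f := fun y => (y + 2) * (y * Real.log y - y + 1) - 3 / 2 * (y - 1) ^ 2)
      (f' := fun y => 2 * ((y + 1) * Real.log y - 2 * (y - 1))) one_pos h1
      (fun y hy => phi_deriv (lt_of_lt_of_le one_pos hy.1))
      (fun y hy => by have := psi_nonneg hy.1; show (0:ℝ) ≤ 2 * ((y + 1) * Real.log y - 2 * (y - 1)); linarith)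
    simp only [Real.log_one] at h
    nlinarith [h]
  · have h := mono_aux (f := fun y => -((y + 2) * (y * Real.log y - y + 1) - 3 / 2 * (y - 1) ^ 2))
      (f' := fun y => -(2 * ((y + 1) * Real.log y - 2 * (y - 1)))) hx h1
      (fun y hy => (phi_deriv (lt_of_lt_of_le hx hy.1)).neg)
      (fun y hy => by have := psi_nonpos (lt_of_lt_of_le hx hy.1) hy.2; show (0:ℝ) ≤ -(2 * ((y + 1) * Real.log y - 2 * (y - 1))); linarith)
    simp only [Real.log_one] at h
    nlinarith [h]

lemma key_scalar' {p q : ℝ} (hp : 0 ≤ p) (hq : 0 ≤ q) (hpq : q = 0 → p = 0) :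
    (p - q) ^ 2 / (p + 2 * q) ≤ 2 / 3 * (p * Real.log (p / q) - p + q) := by
  rcases eq_or_lt_of_le hq with hq0 | hq0
  · have hp0 := hpq hq0.symm
    simp [← hq0, hp0]
  rcases eq_or_lt_of_le hp with hp0 | hp0
  · rw [← hp0]
    have : ((0:ℝ) - q) ^ 2 / (0 + 2 * q) = q / 2 := by
      field_simp; ring
    rw [this]
    simp only [zero_mul, zero_sub, zero_add]
    linarith
  · have hx := key_scalar (x := p / q) (div_pos hp0 hq0)
    have hqne : q ≠ 0 := hq0.ne'
    have h3 : 3 / 2 * (p - q) ^ 2 ≤ (p + 2 * q) * (p * Real.log (p / q) - p + q) := by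
      have h := mul_le_mul_of_nonneg_left hx (sq_nonneg q)
      have e1 : q ^ 2 * (3 / 2 * (p / q - 1) ^ 2) = 3 / 2 * (p - q) ^ 2 := by
        field_simp
      have e2 : q ^ 2 * ((p / q + 2) * (p / q * Real.log (p / q) - p / q + 1))
          = (p + 2 * q) * (p * Real.log (p / q) - p + q) := by
        field_simp
      rw [e1, e2] at h; exact h
    have hd : (0:ℝ) < p + 2 * q := by linarith
    rw [div_le_iff₀ hd]
    nlinarith

/-- **Pinsker-type inequality** for finite sums. -/
lemma pinsker_sum {ι : Type*} (s : Finset ι) (p q : ι → ℝ)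
    (hp : ∀ i ∈ s, 0 ≤ p i) (hq : ∀ i ∈ s, 0 ≤ q i)
    (hpq : ∀ i ∈ s, q i = 0 → p i = 0)
    (hp1 : ∑ i ∈ s, p i = 1) (hq1 : ∑ i ∈ s, q i = 1) :
    (∑ i ∈ s, |p i - q i|) ^ 2 ≤ 2 * ∑ i ∈ s, p i * Real.log (p i / q i) := by
  classical
  set f : ι → ℝ := fun i => Real.sqrt (p i + 2 * q i) with hf
  set g : ι → ℝ := fun i => |p i - q i| / Real.sqrt (p i + 2 * q i) with hg
  have habs : ∀ i ∈ s, f i * g i = |p i - q i| := by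
    intro i hi
    rcases eq_or_lt_of_le (by nlinarith [hp i hi, hq i hi] : (0:ℝ) ≤ p i + 2 * q i) with h0 | h0
    · have hq0 : q i = 0 := by nlinarith [hp i hi, hq i hi]
      have hp0 : p i = 0 := hpq i hi hq0
      simp [hf, hg, hp0, hq0]
    · have : Real.sqrt (p i + 2 * q i) ≠ 0 := by positivity
      simp only [hf, hg]; field_simp
  have hcs := Finset.sum_mul_sq_le_sq_mul_sq s f g
  have hsum : ∑ i ∈ s, f i * g i = ∑ i ∈ s, |p i - q i| :=
    Finset.sum_congr rfl habs
  have hf2 : ∑ i ∈ s, f i ^ 2 = 3 := by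
    have : ∀ i ∈ s, f i ^ 2 = p i + 2 * q i := by
      intro i hi
      exact Real.sq_sqrt (by nlinarith [hp i hi, hq i hi])
    rw [Finset.sum_congr rfl this, Finset.sum_add_distrib, hp1, ← Finset.mul_sum, hq1]
    norm_num
  have hg2 : ∑ i ∈ s, g i ^ 2 ≤ 2 / 3 * ∑ i ∈ s, p i * Real.log (p i / q i) := by
    have hterm : ∀ i ∈ s, g i ^ 2 ≤ 2 / 3 * (p i * Real.log (p i / q i) - p i + q i) := by
      intro i hi
      have : g i ^ 2 = (p i - q i) ^ 2 / (p i + 2 * q i) := by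
        rw [hg, div_pow, sq_abs, Real.sq_sqrt (by nlinarith [hp i hi, hq i hi])]
      rw [this]
      exact key_scalar' (hp i hi) (hq i hi) (hpq i hi)
    calc ∑ i ∈ s, g i ^ 2 ≤ ∑ i ∈ s, 2 / 3 * (p i * Real.log (p i / q i) - p i + q i) :=
          Finset.sum_le_sum hterm
      _ = 2 / 3 * ∑ i ∈ s, p i * Real.log (p i / q i) := by
          rw [← Finset.mul_sum]
          congr 1
          rw [Finset.sum_add_distrib, Finset.sum_sub_distrib, hp1, hq1]
          ring
  have hg2nn : (0:ℝ) ≤ ∑ i ∈ s, g i ^ 2 := Finset.sum_nonneg fun i _ => sq_nonneg _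
  calc (∑ i ∈ s, |p i - q i|) ^ 2 = (∑ i ∈ s, f i * g i) ^ 2 := by rw [hsum]
    _ ≤ (∑ i ∈ s, f i ^ 2) * ∑ i ∈ s, g i ^ 2 := hcs
    _ = 3 * ∑ i ∈ s, g i ^ 2 := by rw [hf2]
    _ ≤ 3 * (2 / 3 * ∑ i ∈ s, p i * Real.log (p i / q i)) := by linarith
    _ = 2 * ∑ i ∈ s, p i * Real.log (p i / q i) := by ring

noncomputable def clamp (a u : ℝ) : ℝ := max (-a) (min a u)

lemma clamp_abs_le {a : ℝ} (ha : 0 ≤ a) (u : ℝ) : |clamp a u| ≤ a := by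
  unfold clamp
  rcases le_total u a with h | h <;> rcases le_total (-a) u with h' | h' <;>
    rw [abs_le] <;> constructor <;>
    simp [min_def, max_def] <;> split_ifs <;> linarith

lemma clamp_abs_le' {a : ℝ} (ha : 0 ≤ a) (u : ℝ) : |clamp a u| ≤ |u| := by
  unfold clamp
  rw [abs_le]
  constructor
  · exact le_trans (le_min (le_trans (neg_nonpos.2 (abs_nonneg u)) ha |>.trans_eq rfl)
      (neg_abs_le u)) (le_max_right _ _)
  · exact max_le (le_trans (neg_nonpos.2 ha) (abs_nonneg u))
      (le_trans (min_le_right a u) (le_abs_self u))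

lemma clamp_sub_sq {a : ℝ} (ha : 0 ≤ a) (u : ℝ) :
    (u - clamp a u) ^ 2 ≤ if a ^ 2 ≤ u ^ 2 then u ^ 2 else 0 := by
  unfold clamp
  split_ifs with hcase
  · rcases le_total u a with h | h <;> rcases le_total (-a) u with h' | h' <;>
      simp [min_def, max_def] <;> split_ifs <;> nlinarith
  · push_neg at hcase
    have h1 : -a ≤ u := by nlinarith
    have h2 : u ≤ a := by nlinarith
    have : min a u = u := min_eq_right h2
    rw [this, max_eq_right h1]
    simp

lemma clamp_sub_abs {a : ℝ} (ha : 0 < a) (u : ℝ) : |u - clamp a u| ≤ u ^ 2 / a := by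
  rcases le_total u a with h | h
  · rcases le_total (-a) u with h' | h'
    · have : clamp a u = u := by
        unfold clamp; rw [min_eq_right h, max_eq_right h']
      rw [this]
      simp only [sub_self, abs_zero]
      positivity
    · have : clamp a u = -a := by
        unfold clamp
        rw [min_eq_right h, max_eq_left h']
      rw [this, sub_neg_eq_add]
      have hu : u ≤ -a := h'
      have habs : |u + a| = -(u + a) := abs_of_nonpos (by linarith)
      rw [habs, le_div_iff₀ ha]
      nlinarith
  · have : clamp a u = a := by
      unfold clamp
      rw [min_eq_left h, max_eq_right (by linarith : -a ≤ a)]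
    rw [this]
    have habs : |u - a| = u - a := abs_of_nonneg (by linarith)
    rw [habs, le_div_iff₀ ha]
    nlinarith

lemma geom_tail {r : ℝ} (h0 : 0 ≤ r) (h1 : r ≤ 1 / 2) (N : ℕ) :
    ∑ k ∈ Finset.range N, r ^ (k + 1) ≤ 2 * r := by
  have hs : ∀ k, r ^ (k + 1) = r * r ^ k := fun k => by ring
  simp_rw [hs, ← Finset.mul_sum]
  have hgs : (∑ k ∈ Finset.range N, r ^ k) * (r - 1) = r ^ N - 1 := geom_sum_mul r N
  have hnn : (0:ℝ) ≤ ∑ k ∈ Finset.range N, r ^ k :=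
    Finset.sum_nonneg fun k _ => pow_nonneg h0 k
  have hpow : (0:ℝ) ≤ r ^ N := pow_nonneg h0 N
  nlinarith

lemma count_bound {T2 u : ℝ} (hT2 : 0 < T2) (N : ℕ) (hu : T2 ≤ u) (huN : u ≤ N * T2) :
    u ≤ ∑ k ∈ Finset.range N, (if ((k : ℝ) + 1) * T2 ≤ u then 2 * T2 else 0) := by
  have hu0 : 0 ≤ u / T2 := div_nonneg (le_trans hT2.le hu) hT2.le
  set m : ℕ := ⌊u / T2⌋₊ with hm
  have hm1 : 1 ≤ m := Nat.le_floor (by rw [Nat.cast_one, le_div_iff₀ hT2]; linarith)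
  have hmN : m ≤ N := by
    have : u / T2 ≤ (N : ℝ) := by rw [div_le_iff₀ hT2]; linarith [huN]
    calc m ≤ ⌊(N:ℝ)⌋₊ := Nat.floor_le_floor this
      _ = N := Nat.floor_natCast N
  have hfil : (Finset.range N).filter (fun k : ℕ => ((k : ℝ) + 1) * T2 ≤ u) = Finset.range m := by
    ext k
    simp only [Finset.mem_filter, Finset.mem_range]
    constructor
    · rintro ⟨-, h⟩
      have : ((k + 1 : ℕ) : ℝ) ≤ u / T2 := by push_cast; rw [le_div_iff₀ hT2]; linarith
      have := Nat.le_floor this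
      omega
    · intro hk
      have hk1 : (k + 1 : ℕ) ≤ m := hk
      have : ((k + 1 : ℕ) : ℝ) ≤ u / T2 := le_trans (by exact_mod_cast hk1) (Nat.floor_le hu0)
      constructor
      · omega
      · push_cast at this; rw [le_div_iff₀ hT2] at this; linarith
  rw [← Finset.sum_filter, hfil, Finset.sum_const, Finset.card_range, nsmul_eq_mul]
  have hlt : u < (m + 1 : ℝ) * T2 := by
    have := Nat.lt_floor_add_one (u / T2)
    rw [div_lt_iff₀ hT2] at this
    push_cast
    linarith
  have hm1' : (1:ℝ) ≤ (m:ℝ) := by exact_mod_cast hm1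
  nlinarith


/-- Mutual information `I(X;Y)` between the (discrete) random variables `X` and `Y`
defined on a finite sample space `Ω` endowed with a probability mass function `μ`. -/
def miFin {Ω 𝒳 𝒴 : Type*} [Fintype Ω] (μ : Ω → ℝ) (X : Ω → 𝒳) (Y : Ω → 𝒴) : ℝ := by
  classical
  exact ∑ x ∈ Finset.univ.image X, ∑ y ∈ Finset.univ.image Y,
    (∑ ω ∈ Finset.univ.filter (fun ω => X ω = x ∧ Y ω = y), μ ω) *
      Real.log ((∑ ω ∈ Finset.univ.filter (fun ω => X ω = x ∧ Y ω = y), μ ω) /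
        ((∑ ω ∈ Finset.univ.filter (fun ω => X ω = x), μ ω) *
          (∑ ω ∈ Finset.univ.filter (fun ω => Y ω = y), μ ω)))

set_option maxHeartbeats 1000000

theorem information_lower_bound_of_correlation_subgaussian
    {Ω : Type*} [Fintype Ω] (μ : Ω → ℝ)
    (hμ0 : ∀ ω, 0 ≤ μ ω) (hμ1 : ∑ ω, μ ω = 1)
    (X Y : Ω → ℝ) (β c : ℝ) (hβ : 0 < β) (hβc : β ≤ c)
    (hEX : ∑ ω, μ ω * X ω = 0)
    (hEY2 : ∑ ω, μ ω * (Y ω) ^ 2 ≤ 1)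
    (hEXY : ∑ ω, μ ω * (X ω * Y ω) = β)
    -- `X` is sub-Gaussian with variance proxy `c²`
    (htail : ∀ t : ℝ, 0 ≤ t →
      ∑ ω ∈ Finset.univ.filter (fun ω => t ≤ |X ω|), μ ω ≤
        2 * Real.exp (-t ^ 2 / c ^ 2)) :
    Real.sqrt (miFin μ X Y) ≥
      β ^ 2 / (192 * Real.sqrt 2 * c ^ 2 * Real.log (2 ^ 20 * c ^ 2 / β ^ 2)) := by
  classical
  have hc : (0:ℝ) < c := lt_of_lt_of_le hβ hβc
  have hβ2 : (0:ℝ) < β ^ 2 := by positivity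
  have hc2 : (0:ℝ) < c ^ 2 := by positivity
  have hb2c2 : β ^ 2 ≤ c ^ 2 := by nlinarith only [hβ, hβc]
  set A := Finset.univ.image X with hA
  set B := Finset.univ.image Y with hB
  set p : ℝ → ℝ → ℝ :=
    fun x y => ∑ ω ∈ Finset.univ.filter (fun ω => X ω = x ∧ Y ω = y), μ ω with hpdef
  set pX : ℝ → ℝ := fun x => ∑ ω ∈ Finset.univ.filter (fun ω => X ω = x), μ ω with hpXdef
  set pY : ℝ → ℝ := fun y => ∑ ω ∈ Finset.univ.filter (fun ω => Y ω = y), μ ω with hpYdef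
  -- fiberwise sum lemmas
  have fiberX : ∀ h : Ω → ℝ,
      ∑ x ∈ A, ∑ ω ∈ Finset.univ.filter (fun ω => X ω = x), h ω = ∑ ω, h ω := fun h =>
    Finset.sum_fiberwise_of_maps_to (fun ω _ => Finset.mem_image_of_mem X (Finset.mem_univ ω)) h
  have fiberY : ∀ h : Ω → ℝ,
      ∑ y ∈ B, ∑ ω ∈ Finset.univ.filter (fun ω => Y ω = y), h ω = ∑ ω, h ω := fun h =>
    Finset.sum_fiberwise_of_maps_to (fun ω _ => Finset.mem_image_of_mem Y (Finset.mem_univ ω)) h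
  have fiber2 : ∀ h : Ω → ℝ,
      ∑ x ∈ A, ∑ y ∈ B,
        (∑ ω ∈ Finset.univ.filter (fun ω => X ω = x ∧ Y ω = y), h ω) = ∑ ω, h ω := by
    intro h
    rw [← fiberX h]
    refine Finset.sum_congr rfl fun x hx => ?_
    rw [← Finset.sum_fiberwise_of_maps_to
      (fun ω (_ : ω ∈ Finset.univ.filter (fun ω => X ω = x)) =>
        Finset.mem_image_of_mem Y (Finset.mem_univ ω)) h]
    exact Finset.sum_congr rfl fun y hy => by rw [Finset.filter_filter]
  have EP : ∀ F : ℝ → ℝ → ℝ,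
      ∑ x ∈ A, ∑ y ∈ B, p x y * F x y = ∑ ω, μ ω * F (X ω) (Y ω) := by
    intro F
    rw [← fiber2 (fun ω => μ ω * F (X ω) (Y ω))]
    refine Finset.sum_congr rfl fun x hx => Finset.sum_congr rfl fun y hy => ?_
    simp only [hpdef]
    rw [Finset.sum_mul]
    refine Finset.sum_congr rfl fun ω hω => ?_
    simp only [Finset.mem_filter] at hω
    rw [hω.2.1, hω.2.2]
  have EPX : ∀ f : ℝ → ℝ, ∑ x ∈ A, pX x * f x = ∑ ω, μ ω * f (X ω) := by
    intro f
    rw [← fiberX (fun ω => μ ω * f (X ω))]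
    refine Finset.sum_congr rfl fun x hx => ?_
    simp only [hpXdef]
    rw [Finset.sum_mul]
    refine Finset.sum_congr rfl fun ω hω => ?_
    simp only [Finset.mem_filter] at hω
    rw [hω.2]
  have EPY : ∀ f : ℝ → ℝ, ∑ y ∈ B, pY y * f y = ∑ ω, μ ω * f (Y ω) := by
    intro f
    rw [← fiberY (fun ω => μ ω * f (Y ω))]
    refine Finset.sum_congr rfl fun y hy => ?_
    simp only [hpYdef]
    rw [Finset.sum_mul]
    refine Finset.sum_congr rfl fun ω hω => ?_
    simp only [Finset.mem_filter] at hω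
    rw [hω.2]
  have hpnn : ∀ x y, 0 ≤ p x y := fun x y => Finset.sum_nonneg fun ω _ => hμ0 ω
  have hpXnn : ∀ x, 0 ≤ pX x := fun x => Finset.sum_nonneg fun ω _ => hμ0 ω
  have hpYnn : ∀ y, 0 ≤ pY y := fun y => Finset.sum_nonneg fun ω _ => hμ0 ω
  have hp1 : ∑ x ∈ A, ∑ y ∈ B, p x y = 1 := by
    simp only [hpdef]; rw [fiber2 μ, hμ1]
  have hpX1 : ∑ x ∈ A, pX x = 1 := by
    simp only [hpXdef]; rw [fiberX μ, hμ1]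
  have hpY1 : ∑ y ∈ B, pY y = 1 := by
    simp only [hpYdef]; rw [fiberY μ, hμ1]
  have hple : ∀ x y, p x y ≤ pX x := fun x y =>
    Finset.sum_le_sum_of_subset_of_nonneg
      (fun ω hω => Finset.mem_filter.2 ⟨Finset.mem_univ _, ((Finset.mem_filter.1 hω).2).1⟩)
      (fun ω _ _ => hμ0 ω)
  have hpleY : ∀ x y, p x y ≤ pY y := fun x y =>
    Finset.sum_le_sum_of_subset_of_nonneg
      (fun ω hω => Finset.mem_filter.2 ⟨Finset.mem_univ _, ((Finset.mem_filter.1 hω).2).2⟩)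
      (fun ω _ _ => hμ0 ω)
  have hq0 : ∀ x y, pX x * pY y = 0 → p x y = 0 := by
    intro x y h
    rcases mul_eq_zero.1 h with h' | h'
    · exact le_antisymm (by rw [← h']; exact hple x y) (hpnn x y)
    · exact le_antisymm (by rw [← h']; exact hpleY x y) (hpnn x y)
  have hmi : miFin μ X Y = ∑ x ∈ A, ∑ y ∈ B, p x y * Real.log (p x y / (pX x * pY y)) := by
    simp only [miFin]; rfl
  set D := ∑ x ∈ A, ∑ y ∈ B, |p x y - pX x * pY y| with hD
  have hq1 : ∑ x ∈ A, ∑ y ∈ B, pX x * pY y = 1 := by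
    have h : ∀ x ∈ A, ∑ y ∈ B, pX x * pY y = pX x := by
      intro x hx; rw [← Finset.mul_sum, hpY1, mul_one]
    rw [Finset.sum_congr rfl h, hpX1]
  have hpinsker : D ^ 2 ≤ 2 * miFin μ X Y := by
    have h := pinsker_sum (A ×ˢ B) (fun z => p z.1 z.2) (fun z => pX z.1 * pY z.2)
      (fun z _ => hpnn z.1 z.2) (fun z _ => mul_nonneg (hpXnn z.1) (hpYnn z.2))
      (fun z _ => hq0 z.1 z.2)
      (by rw [Finset.sum_product]; exact hp1)
      (by rw [Finset.sum_product]; exact hq1)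
    rw [Finset.sum_product, Finset.sum_product] at h
    rw [hD, hmi]
    exact h
  have hDnn : 0 ≤ D :=
    Finset.sum_nonneg fun x _ => Finset.sum_nonneg fun y _ => abs_nonneg _
  -- constants
  set L := Real.log (2 ^ 20 * c ^ 2 / β ^ 2) with hLdef
  have hargpos : (0:ℝ) < 2 ^ 20 * c ^ 2 / β ^ 2 := by positivity
  have harg1 : (2:ℝ) ^ 20 ≤ 2 ^ 20 * c ^ 2 / β ^ 2 := by
    rw [le_div_iff₀ hβ2]; nlinarith only [hb2c2]
  have hL13 : (13:ℝ) ≤ L := by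
    have h1 : Real.log (2 ^ 20) ≤ L := Real.log_le_log (by positivity) harg1
    have h2 : Real.log ((2:ℝ) ^ 20) = 20 * Real.log 2 := by
      rw [Real.log_pow]; norm_num
    have h3 := Real.log_two_gt_d9
    rw [h2] at h1; linarith only [h1, h3]
  have hLpos : (0:ℝ) < L := by linarith only [hL13]
  have hexpL : Real.exp (-L) = β ^ 2 / (2 ^ 20 * c ^ 2) := by
    rw [Real.exp_neg, hLdef, Real.exp_log hargpos]
    rw [inv_div]
  set T := c * Real.sqrt (2 * L) with hTdef
  have hT2 : T ^ 2 = 2 * c ^ 2 * L := by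
    rw [hTdef, mul_pow, Real.sq_sqrt (by linarith only [hLpos] : (0:ℝ) ≤ 2 * L)]; ring
  have hTpos : 0 < T := mul_pos hc (Real.sqrt_pos.2 (by linarith only [hLpos]))
  set M := 8 * T / β with hMdef
  have hMpos : 0 < M := by rw [hMdef]; exact div_pos (by linarith only [hTpos]) hβ
  -- tail second moment bound
  obtain ⟨N, hN⟩ : ∃ N : ℕ, ∀ ω, (X ω) ^ 2 ≤ (N : ℝ) * T ^ 2 := by
    refine ⟨Finset.univ.sup (fun ω => ⌈(X ω) ^ 2 / T ^ 2⌉₊), fun ω => ?_⟩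
    have hT2pos : (0:ℝ) < T ^ 2 := by positivity
    have h1 : (X ω) ^ 2 / T ^ 2 ≤ (⌈(X ω) ^ 2 / T ^ 2⌉₊ : ℝ) := Nat.le_ceil _
    have h2 : (⌈(X ω) ^ 2 / T ^ 2⌉₊ : ℕ) ≤ Finset.univ.sup (fun ω => ⌈(X ω) ^ 2 / T ^ 2⌉₊) :=
      Finset.le_sup (f := fun ω => ⌈(X ω) ^ 2 / T ^ 2⌉₊) (Finset.mem_univ ω)
    have h2' : ((⌈(X ω) ^ 2 / T ^ 2⌉₊ : ℕ) : ℝ) ≤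
        ((Finset.univ.sup (fun ω => ⌈(X ω) ^ 2 / T ^ 2⌉₊) : ℕ) : ℝ) := by exact_mod_cast h2
    rw [div_le_iff₀ hT2pos] at h1
    calc (X ω) ^ 2 ≤ (⌈(X ω) ^ 2 / T ^ 2⌉₊ : ℝ) * T ^ 2 := h1
      _ ≤ _ := mul_le_mul_of_nonneg_right h2' hT2pos.le
  have hEtr : ∑ ω, μ ω * (X ω - clamp T (X ω)) ^ 2 ≤ β ^ 2 / 1024 := by
    have step1 : ∀ ω, μ ω * (X ω - clamp T (X ω)) ^ 2 ≤
        ∑ k ∈ Finset.range N,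
          (if ((k : ℝ) + 1) * T ^ 2 ≤ (X ω) ^ 2 then 2 * T ^ 2 * μ ω else 0) := by
      intro ω
      have hcl := clamp_sub_sq hTpos.le (X ω)
      by_cases hcase : T ^ 2 ≤ (X ω) ^ 2
      · rw [if_pos hcase] at hcl
        have hub := count_bound (by positivity : (0:ℝ) < T ^ 2) N hcase (hN ω)
        calc μ ω * (X ω - clamp T (X ω)) ^ 2 ≤ μ ω * (X ω) ^ 2 :=
              mul_le_mul_of_nonneg_left hcl (hμ0 ω)
          _ ≤ μ ω * ∑ k ∈ Finset.range N,
              (if ((k : ℝ) + 1) * T ^ 2 ≤ (X ω) ^ 2 then 2 * T ^ 2 else 0) :=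
              mul_le_mul_of_nonneg_left hub (hμ0 ω)
          _ = _ := by
              rw [Finset.mul_sum]
              refine Finset.sum_congr rfl fun k _ => ?_
              split_ifs <;> ring
      · rw [if_neg hcase] at hcl
        have h0 : (X ω - clamp T (X ω)) ^ 2 = 0 := le_antisymm hcl (sq_nonneg _)
        rw [h0, mul_zero]
        exact Finset.sum_nonneg fun k _ => by
          split_ifs with h
          · exact mul_nonneg (by positivity) (hμ0 ω)
          · exact le_refl 0
    have step2 : ∑ ω, μ ω * (X ω - clamp T (X ω)) ^ 2 ≤
        ∑ k ∈ Finset.range N, 2 * T ^ 2 * (2 * Real.exp (-(((k : ℝ) + 1) * (2 * L)))) := by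
      calc ∑ ω, μ ω * (X ω - clamp T (X ω)) ^ 2
          ≤ ∑ ω, ∑ k ∈ Finset.range N,
              (if ((k : ℝ) + 1) * T ^ 2 ≤ (X ω) ^ 2 then 2 * T ^ 2 * μ ω else 0) :=
            Finset.sum_le_sum fun ω _ => step1 ω
        _ = ∑ k ∈ Finset.range N, ∑ ω,
              (if ((k : ℝ) + 1) * T ^ 2 ≤ (X ω) ^ 2 then 2 * T ^ 2 * μ ω else 0) :=
            Finset.sum_comm
        _ ≤ _ := by
            refine Finset.sum_le_sum fun k _ => ?_
            have hknn : (0:ℝ) ≤ (k : ℝ) + 1 := by positivity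
            have htnn : (0:ℝ) ≤ T * Real.sqrt ((k : ℝ) + 1) := by positivity
            have htsq : (T * Real.sqrt ((k : ℝ) + 1)) ^ 2 = ((k : ℝ) + 1) * T ^ 2 := by
              rw [mul_pow, Real.sq_sqrt hknn]; ring
            have hcond : ∀ ω, (((k : ℝ) + 1) * T ^ 2 ≤ (X ω) ^ 2) ↔
                (T * Real.sqrt ((k : ℝ) + 1) ≤ |X ω|) := by
              intro ω
              constructor
              · intro h
                rw [← htsq] at h
                have := Real.sqrt_le_sqrt h
                rwa [Real.sqrt_sq htnn, Real.sqrt_sq_eq_abs] at this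
              · intro h
                have := pow_le_pow_left₀ htnn h 2
                rwa [htsq, sq_abs] at this
            calc ∑ ω, (if ((k : ℝ) + 1) * T ^ 2 ≤ (X ω) ^ 2 then 2 * T ^ 2 * μ ω else 0)
                = ∑ ω ∈ Finset.univ.filter
                    (fun ω => T * Real.sqrt ((k : ℝ) + 1) ≤ |X ω|), 2 * T ^ 2 * μ ω := by
                  rw [Finset.sum_filter]
                  exact Finset.sum_congr rfl fun ω _ => if_congr (hcond ω) rfl rfl
              _ = 2 * T ^ 2 * ∑ ω ∈ Finset.univ.filter
                    (fun ω => T * Real.sqrt ((k : ℝ) + 1) ≤ |X ω|), μ ω := by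
                  rw [Finset.mul_sum]
              _ ≤ 2 * T ^ 2 * (2 * Real.exp (-(((k : ℝ) + 1) * (2 * L)))) := by
                  refine mul_le_mul_of_nonneg_left ?_ (by positivity)
                  have h := htail (T * Real.sqrt ((k : ℝ) + 1)) htnn
                  have he : -(T * Real.sqrt ((k : ℝ) + 1)) ^ 2 / c ^ 2 =
                      -(((k : ℝ) + 1) * (2 * L)) := by
                    rw [htsq, hT2]; field_simp
                  rwa [he] at h
    have hr0 : (0:ℝ) ≤ Real.exp (-(2 * L)) := (Real.exp_pos _).le
    have hr1 : Real.exp (-(2 * L)) ≤ 1 / 2 := by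
      have h1 : Real.exp (-(2 * L)) ≤ Real.exp (-26 : ℝ) := Real.exp_le_exp.2 (by linarith only [hL13])
      have h2 : (27:ℝ) ≤ Real.exp (26:ℝ) := by
        have := Real.add_one_le_exp (26:ℝ); linarith only [this]
      have h3 : Real.exp (-26 : ℝ) = (Real.exp (26:ℝ))⁻¹ := by rw [Real.exp_neg]
      have h4 : (0:ℝ) < Real.exp (26:ℝ) := Real.exp_pos _
      rw [h3] at h1
      have h5 : (Real.exp (26:ℝ))⁻¹ ≤ (27:ℝ)⁻¹ := by
        apply inv_anti₀ (by norm_num) h2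
      have : ((27:ℝ))⁻¹ ≤ 1 / 2 := by norm_num
      linarith only [h1, h5, this]
    have hgeo : ∑ k ∈ Finset.range N, Real.exp (-(((k : ℝ) + 1) * (2 * L))) ≤
        2 * Real.exp (-(2 * L)) := by
      have hterm : ∀ k ∈ Finset.range N, Real.exp (-(((k : ℝ) + 1) * (2 * L))) =
          (Real.exp (-(2 * L))) ^ (k + 1) := by
        intro k _
        rw [← Real.exp_nat_mul]
        congr 1
        push_cast; ring
      rw [Finset.sum_congr rfl hterm]
      exact geom_tail hr0 hr1 N
    have hEtr1 : ∑ ω, μ ω * (X ω - clamp T (X ω)) ^ 2 ≤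
        16 * c ^ 2 * L * Real.exp (-(2 * L)) := by
      calc ∑ ω, μ ω * (X ω - clamp T (X ω)) ^ 2
          ≤ ∑ k ∈ Finset.range N, 2 * T ^ 2 * (2 * Real.exp (-(((k : ℝ) + 1) * (2 * L)))) :=
            step2
        _ = 4 * T ^ 2 * ∑ k ∈ Finset.range N, Real.exp (-(((k : ℝ) + 1) * (2 * L))) := by
            rw [Finset.mul_sum]
            exact Finset.sum_congr rfl fun k _ => by ring
        _ ≤ 4 * T ^ 2 * (2 * Real.exp (-(2 * L))) := by
            refine mul_le_mul_of_nonneg_left hgeo (by positivity)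
        _ = 16 * c ^ 2 * L * Real.exp (-(2 * L)) := by rw [hT2]; ring
    have hLexp : L ≤ Real.exp (L / 2) := by
      have h := Real.add_one_le_exp (L / 4)
      have hsq : Real.exp (L / 4) ^ 2 = Real.exp (L / 2) := by
        rw [sq, ← Real.exp_add]; congr 1; ring
      have h0 : (0:ℝ) ≤ L / 4 + 1 := by linarith only [hLpos]
      have h2 := pow_le_pow_left₀ h0 h 2
      rw [hsq] at h2
      nlinarith only [h2, sq_nonneg (L / 4 - 1)]
    have hs2 : Real.exp (-(L / 2)) ^ 2 = Real.exp (-L) := by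
      rw [sq, ← Real.exp_add]; congr 1; ring
    have hsval : Real.exp (-(L / 2)) = β / (2 ^ 10 * c) := by
      have h1 : Real.exp (-(L / 2)) ^ 2 = (β / (2 ^ 10 * c)) ^ 2 := by
        rw [hs2, hexpL, div_pow, mul_pow]
        norm_num
      have h2 : (0:ℝ) ≤ Real.exp (-(L / 2)) := (Real.exp_pos _).le
      have h3 : (0:ℝ) ≤ β / (2 ^ 10 * c) := by positivity
      calc Real.exp (-(L / 2)) = Real.sqrt (Real.exp (-(L / 2)) ^ 2) :=
            (Real.sqrt_sq h2).symm
        _ = Real.sqrt ((β / (2 ^ 10 * c)) ^ 2) := by rw [h1]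
        _ = β / (2 ^ 10 * c) := Real.sqrt_sq h3
    have e2 : Real.exp (L / 2) * Real.exp (-(2 * L)) = Real.exp (-(L / 2)) ^ 3 := by
      rw [← Real.exp_add, show L / 2 + -(2 * L) = (3:ℕ) * (-(L / 2)) by push_cast; ring,
        Real.exp_nat_mul]
    have hstep : 16 * c ^ 2 * L * Real.exp (-(2 * L)) ≤
        16 * c ^ 2 * (Real.exp (-(L / 2)) ^ 3) := by
      rw [← e2]
      have h := mul_le_mul_of_nonneg_right hLexp (Real.exp_pos (-(2 * L))).le
      calc 16 * c ^ 2 * L * Real.exp (-(2 * L)) = 16 * c ^ 2 * (L * Real.exp (-(2 * L))) := by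
            ring
        _ ≤ 16 * c ^ 2 * (Real.exp (L / 2) * Real.exp (-(2 * L))) :=
            mul_le_mul_of_nonneg_left h (by positivity)
    have hval : 16 * c ^ 2 * (Real.exp (-(L / 2)) ^ 3) ≤ β ^ 2 / 1024 := by
      rw [hsval]
      have he : 16 * c ^ 2 * ((β / (2 ^ 10 * c)) ^ 3) = 16 * β ^ 3 / (2 ^ 30 * c) := by
        field_simp
      rw [he, div_le_div_iff₀ (by positivity) (by norm_num)]
      nlinarith only [mul_le_mul_of_nonneg_left hβc hβ2.le, hβ2, hc]
    linarith only [hEtr1, hstep, hval]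
  -- Cauchy–Schwarz helper
  have CS : ∀ u v : Ω → ℝ, (∑ ω, μ ω * (u ω * v ω)) ^ 2 ≤
      (∑ ω, μ ω * (u ω) ^ 2) * (∑ ω, μ ω * (v ω) ^ 2) := by
    intro u v
    have h := Finset.sum_mul_sq_le_sq_mul_sq Finset.univ
      (fun ω => Real.sqrt (μ ω) * u ω) (fun ω => Real.sqrt (μ ω) * v ω)
    have e1 : ∀ ω : Ω, (Real.sqrt (μ ω) * u ω) * (Real.sqrt (μ ω) * v ω)
        = μ ω * (u ω * v ω) := fun ω => by
      rw [show (Real.sqrt (μ ω) * u ω) * (Real.sqrt (μ ω) * v ω)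
        = (Real.sqrt (μ ω) * Real.sqrt (μ ω)) * (u ω * v ω) from by ring,
        Real.mul_self_sqrt (hμ0 ω)]
    have e2 : ∀ (w : Ω → ℝ) (ω : Ω), (Real.sqrt (μ ω) * w ω) ^ 2 = μ ω * (w ω) ^ 2 :=
      fun w ω => by rw [mul_pow, Real.sq_sqrt (hμ0 ω)]
    rw [Finset.sum_congr rfl (fun ω _ => e1 ω), Finset.sum_congr rfl (fun ω _ => e2 u ω),
      Finset.sum_congr rfl (fun ω _ => e2 v ω)] at h
    exact h
  have hEY2nn : (0:ℝ) ≤ ∑ ω, μ ω * (Y ω) ^ 2 :=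
    Finset.sum_nonneg fun ω _ => mul_nonneg (hμ0 ω) (sq_nonneg _)
  -- E|dX| |Y| ≤ β/32
  have hA1 : ∑ ω, μ ω * (|X ω - clamp T (X ω)| * |Y ω|) ≤ β / 32 := by
    have h := CS (fun ω => |X ω - clamp T (X ω)|) (fun ω => |Y ω|)
    simp only [sq_abs] at h
    have h1 : (∑ ω, μ ω * (|X ω - clamp T (X ω)| * |Y ω|)) ^ 2 ≤ β ^ 2 / 1024 := by
      calc (∑ ω, μ ω * (|X ω - clamp T (X ω)| * |Y ω|)) ^ 2
          ≤ (∑ ω, μ ω * (X ω - clamp T (X ω)) ^ 2) * (∑ ω, μ ω * (Y ω) ^ 2) := h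
        _ ≤ (β ^ 2 / 1024) * 1 := by
            apply mul_le_mul hEtr hEY2 hEY2nn (by positivity)
        _ = β ^ 2 / 1024 := mul_one _
    have h2 : (0:ℝ) ≤ ∑ ω, μ ω * (|X ω - clamp T (X ω)| * |Y ω|) :=
      Finset.sum_nonneg fun ω _ =>
        mul_nonneg (hμ0 ω) (mul_nonneg (abs_nonneg _) (abs_nonneg _))
    nlinarith only [h1, h2, hβ]
  -- E|dX| ≤ β/32
  have hEdX : ∑ ω, μ ω * |X ω - clamp T (X ω)| ≤ β / 32 := by
    have h := CS (fun ω => |X ω - clamp T (X ω)|) (fun _ => (1:ℝ))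
    simp only [sq_abs, mul_one, one_pow] at h
    rw [hμ1, mul_one] at h
    have h1 : (∑ ω, μ ω * |X ω - clamp T (X ω)|) ^ 2 ≤ β ^ 2 / 1024 := le_trans h hEtr
    have h2 : (0:ℝ) ≤ ∑ ω, μ ω * |X ω - clamp T (X ω)| :=
      Finset.sum_nonneg fun ω _ => mul_nonneg (hμ0 ω) (abs_nonneg _)
    nlinarith only [h1, h2, hβ]
  -- E|Y| ≤ 1
  have hEY1 : ∑ ω, μ ω * |Y ω| ≤ 1 := by
    have h := CS (fun _ => (1:ℝ)) (fun ω => |Y ω|)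
    simp only [sq_abs, one_mul, one_pow, mul_one] at h
    rw [hμ1, one_mul] at h
    have h2 : (0:ℝ) ≤ ∑ ω, μ ω * |Y ω| :=
      Finset.sum_nonneg fun ω _ => mul_nonneg (hμ0 ω) (abs_nonneg _)
    nlinarith only [h, h2, hEY2]
  -- E|dY| ≤ 1/M
  have hEdY : ∑ ω, μ ω * |Y ω - clamp M (Y ω)| ≤ 1 / M := by
    calc ∑ ω, μ ω * |Y ω - clamp M (Y ω)|
        ≤ ∑ ω, μ ω * ((Y ω) ^ 2 / M) :=
          Finset.sum_le_sum fun ω _ =>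
            mul_le_mul_of_nonneg_left (clamp_sub_abs hMpos (Y ω)) (hμ0 ω)
      _ = (∑ ω, μ ω * (Y ω) ^ 2) / M := by
          rw [Finset.sum_div]
          exact Finset.sum_congr rfl fun ω _ => by ring
      _ ≤ 1 / M := by
          exact (div_le_div_iff_of_pos_right hMpos).2 hEY2
  -- E(|clT X| |dY|) ≤ β/8
  have hTMval : T * (1 / M) = β / 8 := by
    rw [hMdef, one_div_div]
    rw [show T * (β / (8 * T)) = (β * T) / (8 * T) from by ring,
      mul_div_mul_right _ _ hTpos.ne']
  have hA2 : ∑ ω, μ ω * (|clamp T (X ω)| * |Y ω - clamp M (Y ω)|) ≤ β / 8 := by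
    calc ∑ ω, μ ω * (|clamp T (X ω)| * |Y ω - clamp M (Y ω)|)
        ≤ ∑ ω, T * (μ ω * |Y ω - clamp M (Y ω)|) := by
          refine Finset.sum_le_sum fun ω _ => ?_
          rw [show T * (μ ω * |Y ω - clamp M (Y ω)|)
            = μ ω * (T * |Y ω - clamp M (Y ω)|) from by ring]
          refine mul_le_mul_of_nonneg_left ?_ (hμ0 ω)
          exact mul_le_mul_of_nonneg_right (clamp_abs_le hTpos.le (X ω)) (abs_nonneg _)
      _ = T * ∑ ω, μ ω * |Y ω - clamp M (Y ω)| := by rw [Finset.mul_sum]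
      _ ≤ T * (1 / M) := mul_le_mul_of_nonneg_left hEdY hTpos.le
      _ = β / 8 := hTMval
  -- |E_P[XY] − E_P[g]| bound
  have hEPg : |β - ∑ ω, μ ω * (clamp T (X ω) * clamp M (Y ω))| ≤ β / 32 + β / 8 := by
    have hsplit : β - ∑ ω, μ ω * (clamp T (X ω) * clamp M (Y ω))
        = ∑ ω, μ ω * (X ω * Y ω - clamp T (X ω) * clamp M (Y ω)) := by
      rw [← hEXY, ← Finset.sum_sub_distrib]
      exact Finset.sum_congr rfl fun ω _ => by ring
    rw [hsplit]
    calc |∑ ω, μ ω * (X ω * Y ω - clamp T (X ω) * clamp M (Y ω))|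
        ≤ ∑ ω, |μ ω * (X ω * Y ω - clamp T (X ω) * clamp M (Y ω))| :=
          Finset.abs_sum_le_sum_abs _ _
      _ = ∑ ω, μ ω * |X ω * Y ω - clamp T (X ω) * clamp M (Y ω)| := by
          refine Finset.sum_congr rfl fun ω _ => ?_
          rw [abs_mul, abs_of_nonneg (hμ0 ω)]
      _ ≤ ∑ ω, μ ω * (|X ω - clamp T (X ω)| * |Y ω|
            + |clamp T (X ω)| * |Y ω - clamp M (Y ω)|) := by
          refine Finset.sum_le_sum fun ω _ => mul_le_mul_of_nonneg_left ?_ (hμ0 ω)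
          have hd : X ω * Y ω - clamp T (X ω) * clamp M (Y ω)
              = (X ω - clamp T (X ω)) * Y ω + clamp T (X ω) * (Y ω - clamp M (Y ω)) := by
            ring
          rw [hd]
          calc |(X ω - clamp T (X ω)) * Y ω + clamp T (X ω) * (Y ω - clamp M (Y ω))|
              ≤ |(X ω - clamp T (X ω)) * Y ω| + |clamp T (X ω) * (Y ω - clamp M (Y ω))| :=
              abs_add_le _ _
            _ = |X ω - clamp T (X ω)| * |Y ω|
                + |clamp T (X ω)| * |Y ω - clamp M (Y ω)| := by rw [abs_mul, abs_mul]
      _ = (∑ ω, μ ω * (|X ω - clamp T (X ω)| * |Y ω|))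
            + ∑ ω, μ ω * (|clamp T (X ω)| * |Y ω - clamp M (Y ω)|) := by
          rw [← Finset.sum_add_distrib]
          exact Finset.sum_congr rfl fun ω _ => by ring
      _ ≤ β / 32 + β / 8 := add_le_add hA1 hA2
  -- E_Q[g]
  have hEQg_eq : ∑ x ∈ A, ∑ y ∈ B, (pX x * pY y) * (clamp T x * clamp M y)
      = (∑ ω, μ ω * clamp T (X ω)) * (∑ ω, μ ω * clamp M (Y ω)) := by
    rw [← EPX (fun x => clamp T x), ← EPY (fun y => clamp M y), Finset.sum_mul_sum]
    exact Finset.sum_congr rfl fun x _ => Finset.sum_congr rfl fun y _ => by ring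
  have hEclT : |∑ ω, μ ω * clamp T (X ω)| ≤ β / 32 := by
    have hkey : ∑ ω, μ ω * clamp T (X ω) = -∑ ω, μ ω * (X ω - clamp T (X ω)) := by
      have h' : (∑ ω, μ ω * clamp T (X ω)) + ∑ ω, μ ω * (X ω - clamp T (X ω)) = 0 := by
        rw [← Finset.sum_add_distrib, ← hEX]
        exact Finset.sum_congr rfl fun ω _ => by ring
      linarith only [h']
    rw [hkey, abs_neg]
    calc |∑ ω, μ ω * (X ω - clamp T (X ω))|
        ≤ ∑ ω, |μ ω * (X ω - clamp T (X ω))| := Finset.abs_sum_le_sum_abs _ _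
      _ = ∑ ω, μ ω * |X ω - clamp T (X ω)| := by
          refine Finset.sum_congr rfl fun ω _ => ?_
          rw [abs_mul, abs_of_nonneg (hμ0 ω)]
      _ ≤ β / 32 := hEdX
  have hEclM : |∑ ω, μ ω * clamp M (Y ω)| ≤ 1 := by
    calc |∑ ω, μ ω * clamp M (Y ω)|
        ≤ ∑ ω, |μ ω * clamp M (Y ω)| := Finset.abs_sum_le_sum_abs _ _
      _ = ∑ ω, μ ω * |clamp M (Y ω)| := by
          refine Finset.sum_congr rfl fun ω _ => ?_
          rw [abs_mul, abs_of_nonneg (hμ0 ω)]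
      _ ≤ ∑ ω, μ ω * |Y ω| :=
          Finset.sum_le_sum fun ω _ =>
            mul_le_mul_of_nonneg_left (clamp_abs_le' hMpos.le (Y ω)) (hμ0 ω)
      _ ≤ 1 := hEY1
  have hEQg : |∑ x ∈ A, ∑ y ∈ B, (pX x * pY y) * (clamp T x * clamp M y)| ≤ β / 32 := by
    rw [hEQg_eq, abs_mul]
    calc |∑ ω, μ ω * clamp T (X ω)| * |∑ ω, μ ω * clamp M (Y ω)|
        ≤ (β / 32) * 1 := mul_le_mul hEclT hEclM (abs_nonneg _) (by positivity)
      _ = β / 32 := mul_one _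
  -- the separating functional S
  set S := ∑ x ∈ A, ∑ y ∈ B, (p x y - pX x * pY y) * (clamp T x * clamp M y) with hSdef
  have hSsplit : S = (∑ ω, μ ω * (clamp T (X ω) * clamp M (Y ω)))
      - ∑ x ∈ A, ∑ y ∈ B, (pX x * pY y) * (clamp T x * clamp M y) := by
    rw [hSdef, ← EP (fun x y => clamp T x * clamp M y)]
    rw [← Finset.sum_sub_distrib]
    refine Finset.sum_congr rfl fun x _ => ?_
    rw [← Finset.sum_sub_distrib]
    exact Finset.sum_congr rfl fun y _ => by ring
  have hSlow : β / 2 ≤ |S| := by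
    have h1 : |β - S| ≤ (β / 32 + β / 8) + β / 32 := by
      have hb : β - S = (β - ∑ ω, μ ω * (clamp T (X ω) * clamp M (Y ω)))
          + ∑ x ∈ A, ∑ y ∈ B, (pX x * pY y) * (clamp T x * clamp M y) := by
        rw [hSsplit]; ring
      rw [hb]
      exact le_trans (abs_add_le _ _) (add_le_add hEPg hEQg)
    have h2 : |β| - |S| ≤ |β - S| := abs_sub_abs_le_abs_sub β S
    rw [abs_of_pos hβ] at h2
    linarith only [h1, h2, hβ]
  have hSup : |S| ≤ T * M * D := by
    have hpt : ∀ x ∈ A, ∀ y ∈ B, |(p x y - pX x * pY y) * (clamp T x * clamp M y)|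
        ≤ |p x y - pX x * pY y| * (T * M) := by
      intro x _ y _
      rw [abs_mul]
      refine mul_le_mul_of_nonneg_left ?_ (abs_nonneg _)
      rw [abs_mul]
      exact mul_le_mul (clamp_abs_le hTpos.le x) (clamp_abs_le hMpos.le y)
        (abs_nonneg _) hTpos.le
    calc |S| ≤ ∑ x ∈ A, |∑ y ∈ B, (p x y - pX x * pY y) * (clamp T x * clamp M y)| :=
          Finset.abs_sum_le_sum_abs _ _
      _ ≤ ∑ x ∈ A, ∑ y ∈ B, |(p x y - pX x * pY y) * (clamp T x * clamp M y)| :=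
          Finset.sum_le_sum fun x _ => Finset.abs_sum_le_sum_abs _ _
      _ ≤ ∑ x ∈ A, ∑ y ∈ B, |p x y - pX x * pY y| * (T * M) :=
          Finset.sum_le_sum fun x hx => Finset.sum_le_sum fun y hy => hpt x hx y hy
      _ = T * M * D := by
          rw [hD, Finset.mul_sum]
          refine Finset.sum_congr rfl fun x _ => ?_
          rw [Finset.mul_sum]
          exact Finset.sum_congr rfl fun y _ => by ring
  have hTM : T * M = 16 * c ^ 2 * L / β := by
    rw [hMdef, show T * (8 * T / β) = 8 * T ^ 2 / β from by ring, hT2]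
    ring
  have hTMpos : (0:ℝ) < T * M := mul_pos hTpos hMpos
  have hKL : β ^ 4 / (2048 * c ^ 4 * L ^ 2) ≤ miFin μ X Y := by
    have hDlow : β / (2 * (T * M)) ≤ D := by
      rw [div_le_iff₀ (by positivity)]
      nlinarith only [hSlow.trans hSup]
    have h1 : (β / (2 * (T * M))) ^ 2 ≤ D ^ 2 := pow_le_pow_left₀ (by positivity) hDlow 2
    have hTMval2 : 2 * (T * M) = 32 * c ^ 2 * L / β := by rw [hTM]; ring
    have h3 : (β / (2 * (T * M))) ^ 2 = β ^ 4 / (1024 * c ^ 4 * L ^ 2) := by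
      rw [hTMval2]
      field_simp
      ring
    have h4 : β ^ 4 / (2048 * c ^ 4 * L ^ 2) = (β ^ 4 / (1024 * c ^ 4 * L ^ 2)) / 2 := by
      field_simp; ring
    rw [h4]
    rw [← h3]
    linarith only [hpinsker, h1]
  -- conclusion
  rw [ge_iff_le]
  apply Real.le_sqrt_of_sq_le
  have hsq2 : (Real.sqrt 2) ^ 2 = 2 := Real.sq_sqrt (by norm_num)
  have hrw : (β ^ 2 / (192 * Real.sqrt 2 * c ^ 2 * L)) ^ 2
      = β ^ 4 / (73728 * c ^ 4 * L ^ 2) := by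
    rw [div_pow, mul_pow, mul_pow, mul_pow, hsq2]
    norm_num
    ring
  rw [hrw]
  refine le_trans ?_ hKL
  apply div_le_div_of_nonneg_left (by positivity) (by positivity)
  have hnn : (0:ℝ) ≤ c ^ 4 * L ^ 2 := by positivity
  nlinarith only [hnn]


end
end

section
/- Let X and Y be discrete random variables on a common probability space such that |X| ≤ 1 almost surely, E[X] = 0, E[Y²] ≤ 1, and E[XY] = β. Then √(I(X;Y)) ≥ β²/(2√2). -/
/-!
Statement 6 (Lemma 4.3 of the paper): if `X` and `Y` are discrete random variables
with `|X| ≤ 1` a.s., `E[X] = 0`, `E[Y²] ≤ 1` and `E[XY] = β`, then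
`√(I(X;Y)) ≥ β²/(2√2)`.
-/

open Finset Real

noncomputable section

/-- `log x ≥ 2 - 4/(x+1)` for `x ≥ 1`. -/
lemma aux_log_lb {x : ℝ} (hx : 1 ≤ x) : 2 - 4 / (x + 1) ≤ Real.log x := by
  have key : MonotoneOn (fun t : ℝ => Real.log t + 4 / (t + 1)) (Set.Ici 1) := by
    have hd : ∀ t : ℝ, 1 ≤ t →
        HasDerivAt (fun t : ℝ => Real.log t + 4 / (t + 1))
          (1 / t - 4 / (t + 1) ^ 2) t := by
      intro t ht
      have h0 : (0:ℝ) < t := lt_of_lt_of_le one_pos ht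
      have h1 : HasDerivAt Real.log t⁻¹ t := Real.hasDerivAt_log h0.ne'
      have h2 : HasDerivAt (fun t : ℝ => t + 1) 1 t := (hasDerivAt_id t).add_const 1
      have h3 : HasDerivAt (fun t : ℝ => 4 / (t + 1)) (-(4 * 1) / (t + 1) ^ 2) t :=
        ((hasDerivAt_const t (4:ℝ)).div h2 (by positivity)).congr_deriv (by ring)
      refine (h1.add h3).congr_deriv ?_
      field_simp
      ring
    apply monotoneOn_of_deriv_nonneg (convex_Ici 1)
    · intro t ht
      exact (hd t ht).continuousAt.continuousWithinAt
    · intro t ht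
      rw [interior_Ici] at ht
      exact (hd t ht.le).differentiableAt.differentiableWithinAt
    · intro t ht
      rw [interior_Ici] at ht
      rw [(hd t ht.le).deriv]
      have h0 : (0:ℝ) < t := lt_trans one_pos ht
      rw [sub_nonneg, div_le_div_iff₀ (by positivity) h0]
      nlinarith [sq_nonneg (t - 1)]
  have h := key (Set.mem_Ici.2 le_rfl) (Set.mem_Ici.2 hx) hx
  simp only [Real.log_one] at h
  have : (0:ℝ) + 4 / (1 + 1) = 2 := by norm_num
  linarith [h]

/-- `log x ≤ 2 - 4/(x+1)` for `0 < x ≤ 1`. -/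
lemma aux_log_ub {x : ℝ} (hx0 : 0 < x) (hx : x ≤ 1) : Real.log x ≤ 2 - 4 / (x + 1) := by
  have h1 : (1:ℝ) ≤ 1 / x := (le_div_iff₀ hx0).2 (by linarith)
  have h := aux_log_lb h1
  rw [Real.log_div one_ne_zero hx0.ne', Real.log_one] at h
  have hxe : 4 / (1 / x + 1) = 4 * x / (1 + x) := by
    rw [div_add' _ _ _ hx0.ne', div_div_eq_mul_div]
    ring_nf
  rw [hxe] at h
  have e : -(2 - 4 * x / (1 + x)) = 2 - 4 / (x + 1) := by
    field_simp
    ring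
  linarith

/-- Key pointwise inequality: `x log x - x + 1 ≥ 3(x-1)²/(2(x+2))` for `x ≥ 0`. -/
lemma aux_keyA {x : ℝ} (hx : 0 ≤ x) :
    3 * (x - 1) ^ 2 / (2 * (x + 2)) ≤ x * Real.log x - x + 1 := by
  set g : ℝ → ℝ := fun t => t * Real.log t - t + 1 - 3 * (t - 1) ^ 2 / (2 * (t + 2)) with hg
  have hg1 : g 1 = 0 := by simp [hg]
  have hd : ∀ t : ℝ, 0 < t →
      HasDerivAt g (Real.log t - 3 * (t - 1) * (t + 5) / (2 * (t + 2) ^ 2)) t := by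
    intro t ht
    have h1 : HasDerivAt (fun t : ℝ => t * Real.log t) (Real.log t + 1) t := by
      have := (hasDerivAt_id t).mul (Real.hasDerivAt_log ht.ne')
      refine this.congr_deriv ?_
      field_simp
      simp only [id]
      ring
    have h2 : HasDerivAt (fun t : ℝ => 3 * (t - 1) ^ 2) (3 * (2 * (t - 1))) t := by
      have := (((hasDerivAt_id t).sub_const 1).pow 2).const_mul (3:ℝ)
      refine this.congr_deriv ?_
      simp [id]
    have h3 : HasDerivAt (fun t : ℝ => 2 * (t + 2)) 2 t := by
      have := ((hasDerivAt_id t).add_const 2).const_mul (2:ℝ)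
      refine this.congr_deriv ?_
      ring
    have hne : 2 * (t + 2) ≠ 0 := by positivity
    have hq := h2.div h3 hne
    have := ((h1.sub (hasDerivAt_id t)).add_const 1).sub hq
    refine this.congr_deriv ?_
    field_simp
    ring
  have hsignpos : ∀ t : ℝ, 1 ≤ t → 0 ≤ Real.log t - 3 * (t - 1) * (t + 5) / (2 * (t + 2) ^ 2) := by
    intro t ht
    have hlog := aux_log_lb ht
    have ht0 : (0:ℝ) < t := lt_of_lt_of_le one_pos ht
    have e : 2 - 4 / (t + 1) - 3 * (t - 1) * (t + 5) / (2 * (t + 2) ^ 2)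
        = (t - 1) ^ 3 / (2 * (t + 1) * (t + 2) ^ 2) := by
      field_simp
      ring
    have hcube : 0 ≤ (t - 1) ^ 3 / (2 * (t + 1) * (t + 2) ^ 2) := by
      apply div_nonneg (by nlinarith [mul_nonneg (sub_nonneg.2 ht) (sq_nonneg (t-1))]) (by positivity)
    linarith
  have hsignneg : ∀ t : ℝ, 0 < t → t ≤ 1 →
      Real.log t - 3 * (t - 1) * (t + 5) / (2 * (t + 2) ^ 2) ≤ 0 := by
    intro t ht0 ht
    have hlog := aux_log_ub ht0 ht
    have e : 2 - 4 / (t + 1) - 3 * (t - 1) * (t + 5) / (2 * (t + 2) ^ 2)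
        = (t - 1) ^ 3 / (2 * (t + 1) * (t + 2) ^ 2) := by
      field_simp
      ring
    have hcube : (t - 1) ^ 3 / (2 * (t + 1) * (t + 2) ^ 2) ≤ 0 := by
      apply div_nonpos_of_nonpos_of_nonneg
        (by nlinarith [mul_nonpos_of_nonpos_of_nonneg (sub_nonpos.2 ht) (sq_nonneg (t-1))])
        (by positivity)
    linarith
  have main : 0 ≤ g x := by
    rcases eq_or_lt_of_le hx with h0 | hx0
    · simp [hg, ← h0]
      norm_num
    rcases le_or_gt 1 x with h1 | h1
    · -- monotone on Ici 1
      have mono : MonotoneOn g (Set.Ici 1) := by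
        apply monotoneOn_of_deriv_nonneg (convex_Ici 1)
        · intro t ht
          exact (hd t (lt_of_lt_of_le one_pos ht)).continuousAt.continuousWithinAt
        · intro t ht
          rw [interior_Ici] at ht
          exact (hd t (lt_trans one_pos ht)).differentiableAt.differentiableWithinAt
        · intro t ht
          rw [interior_Ici] at ht
          rw [(hd t (lt_trans one_pos ht)).deriv]
          exact hsignpos t ht.le
      have := mono (Set.mem_Ici.2 le_rfl) (Set.mem_Ici.2 h1) h1
      linarith [hg1 ▸ this]
    · -- antitone on Icc x 1
      have anti : AntitoneOn g (Set.Icc x 1) := by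
        apply antitoneOn_of_deriv_nonpos (convex_Icc x 1)
        · intro t ht
          exact (hd t (lt_of_lt_of_le hx0 ht.1)).continuousAt.continuousWithinAt
        · intro t ht
          rw [interior_Icc] at ht
          exact (hd t (lt_trans hx0 ht.1)).differentiableAt.differentiableWithinAt
        · intro t ht
          rw [interior_Icc] at ht
          rw [(hd t (lt_trans hx0 ht.1)).deriv]
          exact hsignneg t (lt_trans hx0 ht.1) ht.2.le
      have := anti (Set.mem_Icc.2 ⟨le_rfl, h1.le⟩) (Set.mem_Icc.2 ⟨h1.le, le_rfl⟩) h1.le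
      linarith [hg1 ▸ this]
  simp only [hg] at main
  linarith

/-- Two-variable version of the key inequality. -/
lemma aux_keyPQ {p q : ℝ} (hp : 0 ≤ p) (hq : 0 ≤ q) (hpq : 0 < p → 0 < q) :
    p - q + 3 * (p - q) ^ 2 / (2 * (p + 2 * q)) ≤ p * Real.log (p / q) := by
  rcases eq_or_lt_of_le hq with hq0 | hq0
  · -- q = 0, hence p = 0
    have hp0 : p = 0 := by
      by_contra h
      have := hpq (lt_of_le_of_ne hp (Ne.symm h))
      exact absurd hq0 (ne_of_lt this)
    simp [hp0, ← hq0]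
  · have h := aux_keyA (div_nonneg hp hq0.le)
    have h' := mul_le_mul_of_nonneg_left h hq0.le
    have eL : q * (3 * (p / q - 1) ^ 2 / (2 * (p / q + 2))) = 3 * (p - q) ^ 2 / (2 * (p + 2 * q)) := by
      field_simp
    have eR : q * (p / q * Real.log (p / q) - p / q + 1) = p * Real.log (p / q) - p + q := by
      field_simp
    linarith [eL ▸ eR ▸ h']

/-- Finite-measure Pinsker inequality plus nonnegativity of KL. -/
lemma aux_pinsker {ι : Type*} (s : Finset ι) (p q : ι → ℝ)
    (hp : ∀ i ∈ s, 0 ≤ p i) (hq : ∀ i ∈ s, 0 ≤ q i)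
    (hpq : ∀ i ∈ s, 0 < p i → 0 < q i)
    (hsum : ∑ i ∈ s, p i = ∑ i ∈ s, q i) :
    (∑ i ∈ s, |p i - q i|) ^ 2
      ≤ 2 * (∑ i ∈ s, q i) * ∑ i ∈ s, p i * Real.log (p i / q i)
    ∧ 0 ≤ ∑ i ∈ s, p i * Real.log (p i / q i) := by
  set G : ι → ℝ := fun i => 3 * (p i - q i) ^ 2 / (2 * (p i + 2 * q i)) with hG
  have hG0 : ∀ i ∈ s, 0 ≤ G i := fun i hi => by
    apply div_nonneg (by positivity)
    have := hp i hi; have := hq i hi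
    linarith
  have hterm : ∀ i ∈ s, p i - q i + G i ≤ p i * Real.log (p i / q i) :=
    fun i hi => aux_keyPQ (hp i hi) (hq i hi) (hpq i hi)
  have hGsum : ∑ i ∈ s, G i ≤ ∑ i ∈ s, p i * Real.log (p i / q i) := by
    have h1 : ∑ i ∈ s, (p i - q i + G i) ≤ ∑ i ∈ s, p i * Real.log (p i / q i) :=
      Finset.sum_le_sum hterm
    have h2 : ∑ i ∈ s, (p i - q i + G i) = ∑ i ∈ s, G i := by
      rw [Finset.sum_add_distrib, Finset.sum_sub_distrib, hsum]
      ring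
    linarith
  have hKL0 : 0 ≤ ∑ i ∈ s, p i * Real.log (p i / q i) :=
    le_trans (Finset.sum_nonneg hG0) hGsum
  refine ⟨?_, hKL0⟩
  have hCS := Finset.sum_sq_le_sum_mul_sum_of_sq_eq_mul s
    (r := fun i => |p i - q i|) (f := fun i => 2 / 3 * (p i + 2 * q i)) (g := G)
    (fun i hi => by have := hp i hi; have := hq i hi; linarith) hG0
    (fun i hi => by
      rcases eq_or_lt_of_le (by have := hp i hi; have := hq i hi; linarith :
          (0:ℝ) ≤ p i + 2 * q i) with h0 | h0
      · have hp0 : p i = 0 := by have := hp i hi; have := hq i hi; linarith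
        have hq0 : q i = 0 := by have := hp i hi; have := hq i hi; linarith
        simp [hG, hp0, hq0]
      · rw [sq_abs, hG]
        have hne : p i + 2 * q i ≠ 0 := h0.ne'
        beta_reduce
        rw [mul_div_assoc', eq_div_iff (mul_ne_zero two_ne_zero hne)]
        ring)
  have hfsum : ∑ i ∈ s, 2 / 3 * (p i + 2 * q i) = 2 * ∑ i ∈ s, q i := by
    rw [← Finset.mul_sum, Finset.sum_add_distrib, ← Finset.mul_sum, hsum]
    ring
  rw [hfsum] at hCS
  calc (∑ i ∈ s, |p i - q i|) ^ 2 ≤ 2 * (∑ i ∈ s, q i) * ∑ i ∈ s, G i := hCS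
    _ ≤ 2 * (∑ i ∈ s, q i) * ∑ i ∈ s, p i * Real.log (p i / q i) := by
        apply mul_le_mul_of_nonneg_left hGsum
        have : 0 ≤ ∑ i ∈ s, q i := Finset.sum_nonneg hq
        linarith

set_option maxHeartbeats 2000000 in
theorem information_lower_bound_of_correlation_bounded
    {Ω : Type*} [Fintype Ω] (μ : Ω → ℝ)
    (hμ0 : ∀ ω, 0 ≤ μ ω) (hμ1 : ∑ ω, μ ω = 1)
    (X Y : Ω → ℝ) (β : ℝ)
    -- `|X| ≤ 1` almost surely
    (hXbdd : ∀ ω, 0 < μ ω → |X ω| ≤ 1)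
    (hEX : ∑ ω, μ ω * X ω = 0)
    (hEY2 : ∑ ω, μ ω * (Y ω) ^ 2 ≤ 1)
    (hEXY : ∑ ω, μ ω * (X ω * Y ω) = β) :
    Real.sqrt (miFin μ X Y) ≥ β ^ 2 / (2 * Real.sqrt 2) := by
  classical
  set S : Finset ℝ := Finset.univ.image X with hS
  set T : Finset ℝ := Finset.univ.image Y with hT
  set J : ℝ → ℝ → ℝ :=
    fun x y => ∑ ω ∈ Finset.univ.filter (fun ω => X ω = x ∧ Y ω = y), μ ω with hJ
  set A : ℝ → ℝ := fun x => ∑ ω ∈ Finset.univ.filter (fun ω => X ω = x), μ ω with hA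
  set B : ℝ → ℝ := fun y => ∑ ω ∈ Finset.univ.filter (fun ω => Y ω = y), μ ω with hB
  have hIdef : miFin μ X Y = ∑ x ∈ S, ∑ y ∈ T, J x y * Real.log (J x y / (A x * B y)) := rfl
  have hmemX : ∀ ω : Ω, X ω ∈ S := fun ω => by
    rw [hS]; exact Finset.mem_image_of_mem X (Finset.mem_univ ω)
  have hmemY : ∀ ω : Ω, Y ω ∈ T := fun ω => by
    rw [hT]; exact Finset.mem_image_of_mem Y (Finset.mem_univ ω)
  have hJ0 : ∀ x y, 0 ≤ J x y := fun x y => Finset.sum_nonneg fun ω _ => hμ0 ω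
  have hA0 : ∀ x, 0 ≤ A x := fun x => Finset.sum_nonneg fun ω _ => hμ0 ω
  have hB0 : ∀ y, 0 ≤ B y := fun y => Finset.sum_nonneg fun ω _ => hμ0 ω
  have hJA : ∀ x y, J x y ≤ A x := by
    intro x y
    apply Finset.sum_le_sum_of_subset_of_nonneg
    · intro ω hω
      simp only [Finset.mem_filter] at *
      tauto
    · intro ω _ _; exact hμ0 ω
  have hJB : ∀ x y, J x y ≤ B y := by
    intro x y
    apply Finset.sum_le_sum_of_subset_of_nonneg
    · intro ω hω
      simp only [Finset.mem_filter] at *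
      tauto
    · intro ω _ _; exact hμ0 ω
  have hcol : ∀ y, ∑ x ∈ S, J x y = B y := by
    intro y
    simp only [hJ, hB, hS]
    rw [← Finset.sum_fiberwise_of_maps_to (g := X) (t := Finset.univ.image X)
      (fun ω _ => Finset.mem_image_of_mem X (Finset.mem_univ ω)) μ]
    apply Finset.sum_congr rfl
    intro x _
    rw [Finset.filter_filter]
    apply Finset.sum_congr _ (fun _ _ => rfl)
    ext ω
    simp only [Finset.mem_filter, Finset.mem_univ, true_and]
    tauto
  have hAsum : ∑ x ∈ S, A x = 1 := by
    simp only [hA, hS]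
    rw [Finset.sum_fiberwise_of_maps_to (g := X) (t := Finset.univ.image X)
      (fun ω _ => Finset.mem_image_of_mem X (Finset.mem_univ ω)) μ, hμ1]
  have hsplit : ∀ f : Ω → ℝ, ∑ ω, f ω =
      ∑ x ∈ S, ∑ y ∈ T, ∑ ω ∈ Finset.univ.filter (fun ω => X ω = x ∧ Y ω = y), f ω := by
    intro f
    rw [← Finset.sum_fiberwise_of_maps_to (g := X) (t := S) (fun ω _ => hmemX ω) f]
    apply Finset.sum_congr rfl
    intro x _
    rw [← Finset.sum_fiberwise_of_maps_to (g := Y) (t := T) (fun ω _ => hmemY ω) f]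
    apply Finset.sum_congr rfl
    intro y _
    rw [Finset.filter_filter]
  have hβ' : β = ∑ x ∈ S, ∑ y ∈ T, J x y * (x * y) := by
    rw [← hEXY, hsplit (fun ω => μ ω * (X ω * Y ω))]
    apply Finset.sum_congr rfl; intro x _
    apply Finset.sum_congr rfl; intro y _
    simp only [hJ]
    rw [Finset.sum_mul]
    apply Finset.sum_congr rfl
    intro ω hω
    simp only [Finset.mem_filter] at hω
    rw [hω.2.1, hω.2.2]
  have hX0 : ∑ x ∈ S, A x * x = 0 := by
    rw [← hEX, ← Finset.sum_fiberwise_of_maps_to (g := X) (t := S) (fun ω _ => hmemX ω)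
      (fun ω => μ ω * X ω)]
    apply Finset.sum_congr rfl
    intro x _
    simp only [hA]
    rw [Finset.sum_mul]
    apply Finset.sum_congr rfl
    intro ω hω
    simp only [Finset.mem_filter] at hω
    rw [hω.2]
  have hY2' : ∑ y ∈ T, B y * y ^ 2 ≤ 1 := by
    have : ∑ y ∈ T, B y * y ^ 2 = ∑ ω, μ ω * (Y ω) ^ 2 := by
      rw [← Finset.sum_fiberwise_of_maps_to (g := Y) (t := T) (fun ω _ => hmemY ω)
        (fun ω => μ ω * (Y ω) ^ 2)]
      apply Finset.sum_congr rfl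
      intro y _
      simp only [hB]
      rw [Finset.sum_mul]
      apply Finset.sum_congr rfl
      intro ω hω
      simp only [Finset.mem_filter] at hω
      rw [hω.2]
    rw [this]; exact hEY2
  have hxbd : ∀ x, 0 < A x → |x| ≤ 1 := by
    intro x hx
    have hex : ∃ ω ∈ Finset.univ.filter (fun ω => X ω = x), μ ω ≠ 0 := by
      by_contra hc
      push_neg at hc
      have : A x = 0 := by simp only [hA]; exact Finset.sum_eq_zero hc
      linarith
    obtain ⟨ω, hω, hne⟩ := hex
    simp only [Finset.mem_filter] at hω
    rw [← hω.2]
    exact hXbdd ω (lt_of_le_of_ne (hμ0 ω) (Ne.symm hne))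
  set C : ℝ → ℝ := fun y => ∑ x ∈ S, (J x y - A x * B y) * x with hC
  set K : ℝ → ℝ := fun y => ∑ x ∈ S, J x y * Real.log (J x y / (A x * B y)) with hK
  have hIK : miFin μ X Y = ∑ y ∈ T, K y := by
    rw [hIdef]
    simp only [hK]
    exact Finset.sum_comm
  have hpins : ∀ y, (∑ x ∈ S, |J x y - A x * B y|) ^ 2 ≤ 2 * B y * K y ∧ 0 ≤ K y := by
    intro y
    have hq : ∑ x ∈ S, A x * B y = B y := by rw [← Finset.sum_mul, hAsum, one_mul]
    have h := aux_pinsker S (fun x => J x y) (fun x => A x * B y)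
      (fun x _ => hJ0 x y) (fun x _ => mul_nonneg (hA0 x) (hB0 y))
      (fun x _ hpos => mul_pos (lt_of_lt_of_le hpos (hJA x y)) (lt_of_lt_of_le hpos (hJB x y)))
      (by rw [hcol y, hq])
    rw [hq] at h
    exact h
  have hI0 : 0 ≤ miFin μ X Y := by
    rw [hIK]; exact Finset.sum_nonneg fun y _ => (hpins y).2
  have hBzero : ∀ y, B y = 0 → C y = 0 := by
    intro y h0
    simp only [hC]
    apply Finset.sum_eq_zero
    intro x _
    have h1 : J x y = 0 := le_antisymm (h0 ▸ hJB x y) (hJ0 x y)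
    rw [h1, h0]
    ring
  have hCabs : ∀ y, |C y| ≤ ∑ x ∈ S, |J x y - A x * B y| := by
    intro y
    simp only [hC]
    refine le_trans (Finset.abs_sum_le_sum_abs _ _) (Finset.sum_le_sum ?_)
    intro x _
    rw [abs_mul]
    rcases eq_or_lt_of_le (hA0 x) with h0 | h0
    · have h1 : J x y = 0 := le_antisymm (h0 ▸ hJA x y) (hJ0 x y)
      rw [h1, ← h0]
      simp
    · exact mul_le_of_le_one_right (abs_nonneg _) (hxbd x h0)
  have hβC : β = ∑ y ∈ T, C y * y := by
    rw [hβ']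
    calc ∑ x ∈ S, ∑ y ∈ T, J x y * (x * y)
        = ∑ y ∈ T, ∑ x ∈ S, J x y * (x * y) := Finset.sum_comm
      _ = ∑ y ∈ T, (C y * y + (∑ x ∈ S, A x * x) * (B y * y)) := by
          apply Finset.sum_congr rfl; intro y _
          simp only [hC]
          rw [Finset.sum_mul, Finset.sum_mul, ← Finset.sum_add_distrib]
          apply Finset.sum_congr rfl; intro x _
          ring
      _ = ∑ y ∈ T, C y * y := by
          apply Finset.sum_congr rfl; intro y _
          rw [hX0]; ring
  have hCSmain := Finset.sum_sq_le_sum_mul_sum_of_sq_eq_mul T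
    (r := fun y => |C y| * |y|) (f := fun y => B y * y ^ 2) (g := fun y => C y ^ 2 / B y)
    (fun y _ => mul_nonneg (hB0 y) (sq_nonneg y))
    (fun y _ => div_nonneg (sq_nonneg _) (hB0 y))
    (fun y _ => by
      show (|C y| * |y|) ^ 2 = (B y * y ^ 2) * (C y ^ 2 / B y)
      rcases eq_or_lt_of_le (hB0 y) with h0 | h0
      · rw [hBzero y h0.symm, ← h0]
        simp
      · rw [mul_pow, sq_abs, sq_abs]
        field_simp)
  have hsum2 : ∑ y ∈ T, C y ^ 2 / B y ≤ 2 * ∑ y ∈ T, K y := by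
    rw [Finset.mul_sum]
    apply Finset.sum_le_sum
    intro y _
    rcases eq_or_lt_of_le (hB0 y) with h0 | h0
    · rw [hBzero y h0.symm, ← h0]
      simpa using mul_nonneg (by norm_num : (0:ℝ) ≤ 2) (hpins y).2
    · rw [div_le_iff₀ h0]
      calc C y ^ 2 ≤ (∑ x ∈ S, |J x y - A x * B y|) ^ 2 := by
            rw [← sq_abs (C y)]
            exact pow_le_pow_left₀ (abs_nonneg _) (hCabs y) 2
        _ ≤ 2 * B y * K y := (hpins y).1
        _ = 2 * K y * B y := by ring
  have hg0 : 0 ≤ ∑ y ∈ T, C y ^ 2 / B y :=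
    Finset.sum_nonneg fun y _ => div_nonneg (sq_nonneg _) (hB0 y)
  have hβ2I : β ^ 2 ≤ 2 * miFin μ X Y := by
    rw [hIK]
    have h1 : |β| ≤ ∑ y ∈ T, |C y| * |y| := by
      rw [hβC]
      refine le_trans (Finset.abs_sum_le_sum_abs _ _) ?_
      apply Finset.sum_le_sum; intro y _; rw [abs_mul]
    calc β ^ 2 ≤ (∑ y ∈ T, |C y| * |y|) ^ 2 := by
          rw [← sq_abs β]
          exact pow_le_pow_left₀ (abs_nonneg β) h1 2
      _ ≤ (∑ y ∈ T, B y * y ^ 2) * (∑ y ∈ T, C y ^ 2 / B y) := hCSmain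
      _ ≤ 1 * (∑ y ∈ T, C y ^ 2 / B y) := mul_le_mul_of_nonneg_right hY2' hg0
      _ = ∑ y ∈ T, C y ^ 2 / B y := one_mul _
      _ ≤ 2 * ∑ y ∈ T, K y := hsum2
  have hβ1 : β ^ 2 ≤ 1 := by
    have hCS := Finset.sum_mul_sq_le_sq_mul_sq Finset.univ
      (fun ω => Real.sqrt (μ ω) * X ω) (fun ω => Real.sqrt (μ ω) * Y ω)
    have e1 : ∑ ω, (Real.sqrt (μ ω) * X ω) * (Real.sqrt (μ ω) * Y ω) = β := by
      rw [← hEXY]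
      apply Finset.sum_congr rfl
      intro ω _
      rw [show (Real.sqrt (μ ω) * X ω) * (Real.sqrt (μ ω) * Y ω)
          = (Real.sqrt (μ ω) * Real.sqrt (μ ω)) * (X ω * Y ω) from by ring,
        Real.mul_self_sqrt (hμ0 ω)]
    have e2 : ∑ ω, (Real.sqrt (μ ω) * X ω) ^ 2 ≤ 1 := by
      rw [← hμ1]
      apply Finset.sum_le_sum
      intro ω _
      rw [mul_pow, Real.sq_sqrt (hμ0 ω)]
      rcases eq_or_lt_of_le (hμ0 ω) with h0 | h0
      · rw [← h0]; simp
      · have hb := hXbdd ω h0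
        have hx2 : X ω ^ 2 ≤ 1 := by
          rw [← sq_abs]
          nlinarith [abs_nonneg (X ω)]
        calc μ ω * X ω ^ 2 ≤ μ ω * 1 := mul_le_mul_of_nonneg_left hx2 (hμ0 ω)
          _ = μ ω := mul_one _
    have e3 : ∑ ω, (Real.sqrt (μ ω) * Y ω) ^ 2 ≤ 1 := by
      refine le_trans (le_of_eq ?_) hEY2
      apply Finset.sum_congr rfl
      intro ω _
      rw [mul_pow, Real.sq_sqrt (hμ0 ω)]
    rw [e1] at hCS
    have h2 : 0 ≤ ∑ ω, (Real.sqrt (μ ω) * Y ω) ^ 2 :=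
      Finset.sum_nonneg fun ω _ => sq_nonneg _
    nlinarith [hCS]
  -- final numeric step
  rw [ge_iff_le]
  have h2pos : (0:ℝ) < Real.sqrt 2 := Real.sqrt_pos.2 (by norm_num)
  have habs : |β| ≤ 1 := by
    nlinarith [sq_abs β, abs_nonneg β]
  have hs : Real.sqrt (β ^ 2 / 2) ≤ Real.sqrt (miFin μ X Y) :=
    Real.sqrt_le_sqrt (by linarith)
  have he : Real.sqrt (β ^ 2 / 2) = |β| / Real.sqrt 2 := by
    rw [Real.sqrt_div (sq_nonneg β), Real.sqrt_sq_eq_abs]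
  calc β ^ 2 / (2 * Real.sqrt 2) ≤ |β| / Real.sqrt 2 := by
        rw [div_le_div_iff₀ (by positivity) h2pos]
        have hb2 : β ^ 2 ≤ |β| := by nlinarith [sq_abs β, abs_nonneg β]
        nlinarith [mul_le_mul_of_nonneg_right hb2 h2pos.le,
          mul_nonneg (abs_nonneg β) h2pos.le]
    _ = Real.sqrt (β ^ 2 / 2) := he.symm
    _ ≤ _ := hs
end
end

section
/- Let X and Y be random variables with E[X] = 0, E[Y²] ≤ 1, E[XY] = β for some 0 < β ≤ c, and suppose P(|X| ≥ t) ≤ 2e^{−t²/c²} for all t ≥ 0. Set c' = 2c√(ln(2^30 c³/β³)) and define the truncated and rescaled variable X̂ = max(min(X, c'), −c')/c'. Then E[X̂ · Y] ≥ β/(2c'). -/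
/-!
Statement 7 (truncation step in the proof of Lemma 4.2): if `E[X] = 0`, `E[Y²] ≤ 1`,
`E[XY] = β` with `0 < β ≤ c`, and `P(|X| ≥ t) ≤ 2exp(−t²/c²)` for all `t ≥ 0`, then,
setting `c' = 2c√(ln(2³⁰c³/β³))` and `X̂ = max(min(X, c'), −c')/c'`, one has
`E[X̂·Y] ≥ β/(2c')`.
-/

open MeasureTheory Real

private lemma my_integral_exp_neg_mul_Ioi {b : ℝ} (hb : 0 < b) :
    ∫ t in Set.Ioi (0:ℝ), Real.exp (-b * t) = b⁻¹ := by
  have h := MeasureTheory.integral_comp_mul_left_Ioi (fun x => Real.exp (-x)) 0 hb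
  simp only [mul_zero, integral_exp_neg_Ioi_zero, smul_eq_mul, mul_one] at h
  simpa [neg_mul] using h


theorem truncation_preserves_correlation
    {Ω : Type*} [MeasurableSpace Ω] (μ : Measure Ω) [IsProbabilityMeasure μ]
    (X Y : Ω → ℝ) (hXm : Measurable X) (hYm : Measurable Y)
    (β c : ℝ) (hβ : 0 < β) (hβc : β ≤ c)
    (hXint : Integrable X μ) (hEX : ∫ ω, X ω ∂μ = 0)
    (hY2int : Integrable (fun ω => (Y ω) ^ 2) μ) (hEY2 : ∫ ω, (Y ω) ^ 2 ∂μ ≤ 1)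
    (hXYint : Integrable (fun ω => X ω * Y ω) μ) (hEXY : ∫ ω, X ω * Y ω ∂μ = β)
    -- sub-Gaussian tail bound `P(|X| ≥ t) ≤ 2exp(−t²/c²)`
    (htail : ∀ t : ℝ, 0 ≤ t →
      μ {ω | t ≤ |X ω|} ≤ ENNReal.ofReal (2 * Real.exp (-t ^ 2 / c ^ 2)))
    (c' : ℝ) (hc' : c' = 2 * c * Real.sqrt (Real.log (2 ^ 30 * c ^ 3 / β ^ 3))) :
    ∫ ω, (max (min (X ω) c') (-c') / c') * Y ω ∂μ ≥ β / (2 * c') := by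
  have hc : 0 < c := lt_of_lt_of_le hβ hβc
  set L : ℝ := Real.log (2 ^ 30 * c ^ 3 / β ^ 3) with hLdef
  set A : ℝ := 2 ^ 30 * c ^ 3 / β ^ 3 with hAdef
  have hApos : 0 < A := by positivity
  have hA1 : (2:ℝ) ≤ A := by
    have h1 : (1:ℝ) ≤ c ^ 3 / β ^ 3 :=
      (one_le_div (by positivity)).mpr (pow_le_pow_left₀ hβ.le hβc 3)
    have : (2:ℝ) ^ 30 * 1 ≤ 2 ^ 30 * (c ^ 3 / β ^ 3) := by nlinarith
    calc (2:ℝ) ≤ 2 ^ 30 * 1 := by norm_num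
      _ ≤ 2 ^ 30 * (c ^ 3 / β ^ 3) := this
      _ = A := by rw [hAdef]; ring
  have hL0 : 0 < L := Real.log_pos (by linarith)
  have hc'pos : 0 < c' := by
    rw [hc']
    have := Real.sqrt_pos.mpr hL0
    positivity
  have hc'sq : c' ^ 2 = 4 * c ^ 2 * L := by
    rw [hc']
    have h : (2 * c * Real.sqrt L) ^ 2 = 4 * c ^ 2 * Real.sqrt L ^ 2 := by ring
    rw [h, Real.sq_sqrt hL0.le]
  -- value of exp(-c'^2/c^2)
  have hexp : Real.exp (-(c' ^ 2) / c ^ 2) = β ^ 12 / (2 ^ 120 * c ^ 12) := by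
    have h4 : -(c' ^ 2) / c ^ 2 = -(4 * L) := by
      rw [hc'sq]; field_simp
    have hA4 : Real.exp (4 * L) = A ^ 4 := by
      rw [show (4:ℝ) * L = L + L + (L + L) by ring, Real.exp_add, Real.exp_add,
        hLdef, Real.exp_log hApos]
      ring
    rw [h4, Real.exp_neg, hA4, hAdef]
    rw [div_pow, inv_div]
    field_simp
  -- the clipped variable and the excess
  set Z : Ω → ℝ := fun ω => max (min (X ω) c') (-c') with hZdef
  set W : Ω → ℝ := fun ω => max (|X ω| - c') 0 with hWdef
  have hWnn : ∀ ω, 0 ≤ W ω := fun ω => le_max_right _ _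
  have habs : ∀ ω, |X ω - Z ω| = W ω := by
    intro ω
    simp only [hZdef, hWdef]
    rcases le_total (X ω) (-c') with h | h
    · rw [min_eq_left (h.trans (by linarith)), max_eq_right h,
        abs_of_nonpos (by linarith), abs_of_nonpos (by linarith : X ω ≤ 0),
        max_eq_left (by linarith)]
      ring
    · rcases le_total (X ω) c' with h2 | h2
      · rw [min_eq_left h2, max_eq_left h, sub_self, abs_zero]
        have : |X ω| ≤ c' := abs_le.mpr ⟨by linarith, h2⟩
        rw [max_eq_right (by linarith)]
      · rw [min_eq_right h2, max_eq_left (by linarith),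
          abs_of_nonneg (by linarith), abs_of_nonneg (by linarith : (0:ℝ) ≤ X ω),
          max_eq_left (by linarith)]
  have hWm : Measurable W := (hXm.abs.sub measurable_const).max measurable_const
  have hZm : Measurable Z := (hXm.min measurable_const).max measurable_const
  -- layer cake bound on E[W^2]
  have hW2lin : ∫⁻ ω, ENNReal.ofReal ((W ω) ^ 2) ∂μ
      ≤ ENNReal.ofReal (2 * c ^ 2 * Real.exp (-(c' ^ 2) / c ^ 2)) := by
    rw [lintegral_eq_lintegral_meas_lt μ (Filter.Eventually.of_forall fun ω => sq_nonneg _)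
      ((hWm.pow_const 2).aemeasurable)]
    have key : ∀ t ∈ Set.Ioi (0:ℝ), μ {a | t < (W a) ^ 2}
        ≤ ENNReal.ofReal (2 * Real.exp (-(c' ^ 2 + t) / c ^ 2)) := by
      intro t ht
      have ht0 : 0 < t := ht
      have hsub : {a | t < (W a) ^ 2} ⊆ {ω | c' + Real.sqrt t ≤ |X ω|} := by
        intro a ha
        simp only [Set.mem_setOf_eq] at ha ⊢
        have h1 : Real.sqrt t < W a := by
          have := Real.sqrt_lt_sqrt ht0.le ha
          rwa [Real.sqrt_sq (hWnn a)] at this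
        have h2 : 0 < W a := lt_of_le_of_lt (Real.sqrt_nonneg t) h1
        have h3 : W a = |X a| - c' := by
          by_contra hne
          have : W a = 0 := by
            simp only [hWdef] at hne ⊢
            rcases max_choice (|X a| - c') 0 with h | h
            · exact absurd h hne
            · exact h
          linarith
        rw [h3] at h1
        linarith
      calc μ {a | t < (W a) ^ 2} ≤ μ {ω | c' + Real.sqrt t ≤ |X ω|} := measure_mono hsub
        _ ≤ ENNReal.ofReal (2 * Real.exp (-(c' + Real.sqrt t) ^ 2 / c ^ 2)) :=
            htail _ (by positivity)
        _ ≤ ENNReal.ofReal (2 * Real.exp (-(c' ^ 2 + t) / c ^ 2)) := by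
            apply ENNReal.ofReal_le_ofReal
            have hst : Real.sqrt t ^ 2 = t := Real.sq_sqrt ht0.le
            have : c' ^ 2 + t ≤ (c' + Real.sqrt t) ^ 2 := by
              nlinarith [Real.sqrt_nonneg t, hc'pos.le]
            have hdiv : -(c' + Real.sqrt t) ^ 2 / c ^ 2 ≤ -(c' ^ 2 + t) / c ^ 2 :=
              div_le_div_of_nonneg_right (by linarith) (by positivity)
            exact mul_le_mul_of_nonneg_left (Real.exp_le_exp.mpr hdiv) (by norm_num)
    calc ∫⁻ t in Set.Ioi (0:ℝ), μ {a | t < (W a) ^ 2}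
        ≤ ∫⁻ t in Set.Ioi (0:ℝ), ENNReal.ofReal (2 * Real.exp (-(c' ^ 2 + t) / c ^ 2)) := by
          exact setLIntegral_mono' measurableSet_Ioi key
      _ = ENNReal.ofReal (∫ t in Set.Ioi (0:ℝ), 2 * Real.exp (-(c' ^ 2 + t) / c ^ 2)) := by
          rw [ofReal_integral_eq_lintegral_ofReal]
          · have heq : ∀ t : ℝ, 2 * Real.exp (-(c' ^ 2 + t) / c ^ 2)
                = (2 * Real.exp (-(c' ^ 2) / c ^ 2)) * Real.exp (-(1 / c ^ 2) * t) := by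
              intro t
              rw [mul_assoc, ← Real.exp_add]
              congr 1
              field_simp
              ring
            simp only [heq]
            exact (exp_neg_integrableOn_Ioi 0 (by positivity : (0:ℝ) < 1 / c ^ 2)).const_mul _
          · exact Filter.Eventually.of_forall fun t => by positivity
      _ = ENNReal.ofReal (2 * c ^ 2 * Real.exp (-(c' ^ 2) / c ^ 2)) := by
          congr 1
          have heq : ∀ t : ℝ, 2 * Real.exp (-(c' ^ 2 + t) / c ^ 2)
              = (2 * Real.exp (-(c' ^ 2) / c ^ 2)) * Real.exp (-(1 / c ^ 2) * t) := by
            intro t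
            rw [mul_assoc, ← Real.exp_add]
            congr 1
            field_simp
            ring
          simp only [heq]
          rw [MeasureTheory.integral_const_mul, my_integral_exp_neg_mul_Ioi
            (by positivity : (0:ℝ) < 1 / c ^ 2)]
          field_simp
  -- integrability of W^2
  have hW2int : Integrable (fun ω => (W ω) ^ 2) μ := by
    refine ⟨(hWm.pow_const 2).aestronglyMeasurable, ?_⟩
    rw [hasFiniteIntegral_iff_ofReal (Filter.Eventually.of_forall fun ω => sq_nonneg _)]
    exact lt_of_le_of_lt hW2lin ENNReal.ofReal_lt_top
  -- bound on E[W^2]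
  have hW2le : ∫ ω, (W ω) ^ 2 ∂μ ≤ β ^ 2 / 8 := by
    have h1 : ∫ ω, (W ω) ^ 2 ∂μ ≤ 2 * c ^ 2 * Real.exp (-(c' ^ 2) / c ^ 2) := by
      have := ofReal_integral_eq_lintegral_ofReal hW2int
        (Filter.Eventually.of_forall fun ω => sq_nonneg _)
      rw [← ENNReal.ofReal_le_ofReal_iff (by positivity), this]
      exact hW2lin
    refine h1.trans ?_
    rw [hexp]
    rw [show 2 * c ^ 2 * (β ^ 12 / (2 ^ 120 * c ^ 12)) = β ^ 12 / (2 ^ 119 * c ^ 10) by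
      field_simp]
    rw [div_le_div_iff₀ (by positivity) (by norm_num)]
    have h10 : β ^ 10 ≤ c ^ 10 := pow_le_pow_left₀ hβ.le hβc 10
    have hbc : β ^ 2 * β ^ 10 ≤ β ^ 2 * c ^ 10 := mul_le_mul_of_nonneg_left h10 (sq_nonneg β)
    have hnn : (0:ℝ) ≤ β ^ 2 * c ^ 10 := by positivity
    calc β ^ 12 * 8 = 8 * (β ^ 2 * β ^ 10) := by ring
      _ ≤ 8 * (β ^ 2 * c ^ 10) := mul_le_mul_of_nonneg_left hbc (by norm_num)
      _ ≤ 2 ^ 119 * (β ^ 2 * c ^ 10) := mul_le_mul_of_nonneg_right (by norm_num) hnn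
      _ = β ^ 2 * (2 ^ 119 * c ^ 10) := by ring
  -- AM-GM pointwise bound
  set g : Ω → ℝ := fun ω => ((4 / β) * (W ω) ^ 2 + (β / 4) * (Y ω) ^ 2) / 2 with hgdef
  have hgbound : ∀ ω, |(X ω - Z ω) * Y ω| ≤ g ω := by
    intro ω
    rw [abs_mul, habs ω]
    show W ω * |Y ω| ≤ ((4 / β) * (W ω) ^ 2 + (β / 4) * (Y ω) ^ 2) / 2
    have key : 8 * β * (W ω * |Y ω|) ≤ 16 * (W ω) ^ 2 + β ^ 2 * (Y ω) ^ 2 := by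
      nlinarith [sq_nonneg (4 * W ω - β * |Y ω|), sq_abs (Y ω)]
    have : ((4 / β) * (W ω) ^ 2 + (β / 4) * (Y ω) ^ 2) / 2
        = (16 * (W ω) ^ 2 + β ^ 2 * (Y ω) ^ 2) / (8 * β) := by
      field_simp
      ring
    rw [this, le_div_iff₀ (by positivity)]
    linarith
  have hgint : Integrable g μ :=
    (((hW2int.const_mul (4 / β)).add (hY2int.const_mul (β / 4))).div_const 2)
  have hWYint : Integrable (fun ω => (X ω - Z ω) * Y ω) μ := by
    refine Integrable.mono' hgint (((hXm.sub hZm).mul hYm).aestronglyMeasurable)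
      (Filter.Eventually.of_forall fun ω => ?_)
    exact hgbound ω
  have hWYle : ∫ ω, (X ω - Z ω) * Y ω ∂μ ≤ 3 * β / 8 := by
    have h1 : ∫ ω, (X ω - Z ω) * Y ω ∂μ ≤ ∫ ω, g ω ∂μ :=
      integral_mono hWYint hgint fun ω => (le_abs_self _).trans (hgbound ω)
    have h2 : ∫ ω, g ω ∂μ = ((4 / β) * ∫ ω, (W ω) ^ 2 ∂μ + (β / 4) * ∫ ω, (Y ω) ^ 2 ∂μ) / 2 := by
      rw [hgdef]
      simp only
      rw [integral_div, integral_add (hW2int.const_mul _) (hY2int.const_mul _),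
        integral_const_mul, integral_const_mul]
    have h3 : (4 / β) * ∫ ω, (W ω) ^ 2 ∂μ ≤ β / 2 := by
      have := mul_le_mul_of_nonneg_left hW2le (by positivity : (0:ℝ) ≤ 4 / β)
      calc (4 / β) * ∫ ω, (W ω) ^ 2 ∂μ ≤ (4 / β) * (β ^ 2 / 8) := this
        _ = β / 2 := by field_simp; ring
    have h4 : (β / 4) * ∫ ω, (Y ω) ^ 2 ∂μ ≤ β / 4 := by
      have := mul_le_mul_of_nonneg_left hEY2 (by positivity : (0:ℝ) ≤ β / 4)
      linarith
    rw [h2] at h1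
    linarith
  -- integral of Z*Y
  have hZYeq : ∫ ω, Z ω * Y ω ∂μ = β - ∫ ω, (X ω - Z ω) * Y ω ∂μ := by
    have : (fun ω => Z ω * Y ω) = fun ω => X ω * Y ω - (X ω - Z ω) * Y ω := by
      funext ω; ring
    rw [this, integral_sub hXYint hWYint, hEXY]
  have hZY : ∫ ω, Z ω * Y ω ∂μ ≥ β / 2 := by
    rw [hZYeq]; linarith
  -- finish
  have hfin : (fun ω => (max (min (X ω) c') (-c') / c') * Y ω)
      = fun ω => c'⁻¹ * (Z ω * Y ω) := by
    funext ω
    simp only [hZdef]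
    ring
  rw [hfin, MeasureTheory.integral_const_mul]
  have : β / (2 * c') = c'⁻¹ * (β / 2) := by rw [inv_mul_eq_div, div_div]
  rw [this]
  exact mul_le_mul_of_nonneg_left hZY (by positivity)
end

section
/- Let X and Y be discrete random variables on a common probability space with |X| ≤ 1 almost surely, E[X] = 0, E[Y²] ≤ 1, and E[XY] = β. Then E[X²] − √( E[X²] · (E[X²] − β²) ) ≤ √( 2 · I(X;Y) ). (Note that β² ≤ E[X²] by Cauchy–Schwarz, so the left-hand side is well defined and nonnegative.) -/
/-!
Statement 11: if `X` and `Y` are discrete random variables with `|X| ≤ 1` a.s.,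
`E[X] = 0`, `E[Y²] ≤ 1` and `E[XY] = β`, then
`E[X²] − √(E[X²]·(E[X²] − β²)) ≤ √(2·I(X;Y))`.
-/

open Finset Real

noncomputable section

lemma log_ineq_one_le {t : ℝ} (ht : 1 ≤ t) : 2*(t-1) ≤ (t+1) * Real.log t := by
  set f : ℝ → ℝ := fun s => (s+1) * Real.log s - 2*(s-1) with hf
  have hd : ∀ x : ℝ, 0 < x → HasDerivAt f (Real.log x + (x+1) * x⁻¹ - 2) x := by
    intro x hx
    have h1 : HasDerivAt (fun y : ℝ => y + 1) 1 x := (hasDerivAt_id x).add_const 1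
    have h2 : HasDerivAt Real.log x⁻¹ x := Real.hasDerivAt_log hx.ne'
    have h3 := h1.mul h2
    have h4 : HasDerivAt (fun y : ℝ => 2*(y-1)) 2 x := by
      simpa using ((hasDerivAt_id x).sub_const 1).const_mul 2
    have := h3.sub h4
    exact this.congr_deriv (by ring)
  have hmono : MonotoneOn f (Set.Icc 1 t) := by
    apply monotoneOn_of_deriv_nonneg (convex_Icc 1 t)
    · intro x hx
      exact (hd x (lt_of_lt_of_le one_pos hx.1)).continuousAt.continuousWithinAt
    · intro x hx
      rw [interior_Icc] at hx
      exact (hd x (lt_trans one_pos hx.1)).differentiableAt.differentiableWithinAt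
    · intro x hx
      rw [interior_Icc] at hx
      have hx0 : (0:ℝ) < x := lt_trans one_pos hx.1
      rw [(hd x hx0).deriv]
      have hlog : 1 - x⁻¹ ≤ Real.log x := by
        have := Real.log_le_sub_one_of_pos (x := x⁻¹) (by positivity)
        rw [Real.log_inv] at this; linarith
      have hxi : x * x⁻¹ = 1 := mul_inv_cancel₀ hx0.ne'
      have hxinv : 0 < x⁻¹ := by positivity
      nlinarith
  have := hmono (Set.left_mem_Icc.mpr ht) (Set.right_mem_Icc.mpr ht) ht
  simp [hf, Real.log_one] at this
  linarith


lemma log_ineq_le_one {t : ℝ} (h0 : 0 < t) (ht : t ≤ 1) : (t+1) * Real.log t ≤ 2*(t-1) := by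
  have h1 : 1 ≤ t⁻¹ := one_le_inv_iff₀.mpr ⟨h0, ht⟩
  have h2 := log_ineq_one_le h1
  rw [Real.log_inv] at h2
  have h3 := mul_le_mul_of_nonneg_left h2 h0.le
  have hxi : t * t⁻¹ = 1 := mul_inv_cancel₀ h0.ne'
  nlinarith [h3]

lemma key_ineq {t : ℝ} (h0 : 0 < t) : 3*(t-1)^2 ≤ 2*(t+2)*(t*Real.log t - t + 1) := by
  set g : ℝ → ℝ := fun s => 2*(s+2)*(s*Real.log s - s + 1) - 3*(s-1)^2 with hg
  have hd : ∀ x : ℝ, 0 < x → HasDerivAt g (4*((x+1)*Real.log x - 2*(x-1))) x := by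
    intro x hx
    have hxi : x * x⁻¹ = 1 := mul_inv_cancel₀ hx.ne'
    have h2 : HasDerivAt Real.log x⁻¹ x := Real.hasDerivAt_log hx.ne'
    have h3 : HasDerivAt (fun y : ℝ => y * Real.log y - y + 1)
        (1 * Real.log x + x * x⁻¹ - 1) x := (((hasDerivAt_id x).mul h2).sub (hasDerivAt_id x)).add_const 1
    have h4 : HasDerivAt (fun y : ℝ => 2*(y+2)) 2 x := by
      simpa using ((hasDerivAt_id x).add_const 2).const_mul 2
    have h5 := h4.mul h3
    have h6 : HasDerivAt (fun y : ℝ => 3*(y-1)^2) (3*(2*(x-1))) x := by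
      simpa using (((hasDerivAt_id x).sub_const 1).pow 2).const_mul 3
    have h7 := h5.sub h6
    apply h7.congr_deriv
    rw [hxi]; ring
  have hg1 : g 1 = 0 := by simp [hg]
  rcases le_total 1 t with h | h
  · have hmono : MonotoneOn g (Set.Icc 1 t) := by
      apply monotoneOn_of_deriv_nonneg (convex_Icc 1 t)
      · intro x hx
        exact (hd x (lt_of_lt_of_le one_pos hx.1)).continuousAt.continuousWithinAt
      · intro x hx
        rw [interior_Icc] at hx
        exact (hd x (lt_trans one_pos hx.1)).differentiableAt.differentiableWithinAt
      · intro x hx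
        rw [interior_Icc] at hx
        have hx1 : (1:ℝ) ≤ x := hx.1.le
        rw [(hd x (lt_of_lt_of_le one_pos hx1)).deriv]
        have := log_ineq_one_le hx1
        linarith
    have := hmono (Set.left_mem_Icc.mpr h) (Set.right_mem_Icc.mpr h) h
    rw [hg1] at this
    simp only [hg] at this
    linarith
  · have hmono : AntitoneOn g (Set.Icc t 1) := by
      apply antitoneOn_of_deriv_nonpos (convex_Icc t 1)
      · intro x hx
        exact (hd x (lt_of_lt_of_le h0 hx.1)).continuousAt.continuousWithinAt
      · intro x hx
        rw [interior_Icc] at hx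
        exact (hd x (lt_trans h0 hx.1)).differentiableAt.differentiableWithinAt
      · intro x hx
        rw [interior_Icc] at hx
        have hx0 : (0:ℝ) < x := lt_trans h0 hx.1
        rw [(hd x hx0).deriv]
        have := log_ineq_le_one hx0 hx.2.le
        linarith
    have := hmono (Set.left_mem_Icc.mpr h) (Set.right_mem_Icc.mpr h) h
    rw [hg1] at this
    simp only [hg] at this
    linarith

lemma kl_pointwise {a b : ℝ} (ha : 0 ≤ a) (hb : 0 < b) :
    3*(a-b)^2 ≤ (a * Real.log (a/b) - a + b) * (2*(a+2*b)) := by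
  rcases eq_or_lt_of_le ha with h | h
  · rw [← h]
    have : (0:ℝ) * Real.log (0/b) = 0 := by simp
    nlinarith [this]
  · have ht : 0 < a/b := div_pos h hb
    have h1 := key_ineq ht
    have h2 := mul_le_mul_of_nonneg_left h1 (by positivity : (0:ℝ) ≤ b^2)
    have e1 : b^2 * (3*(a/b-1)^2) = 3*(a-b)^2 := by field_simp
    have e2 : b^2 * (2*(a/b+2)*((a/b)*Real.log (a/b) - a/b + 1))
        = (a * Real.log (a/b) - a + b) * (2*(a+2*b)) := by field_simp
    rw [e1, e2] at h2
    exact h2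

lemma pinsker_fin {ι : Type*} (s : Finset ι) (p q : ι → ℝ)
    (hp0 : ∀ i ∈ s, 0 ≤ p i) (hq0 : ∀ i ∈ s, 0 ≤ q i)
    (hp1 : ∑ i ∈ s, p i = 1) (hq1 : ∑ i ∈ s, q i = 1)
    (hac : ∀ i ∈ s, q i = 0 → p i = 0) :
    (∑ i ∈ s, |p i - q i|)^2 ≤ 2 * ∑ i ∈ s, p i * Real.log (p i / q i) := by
  classical
  set F : ι → ℝ := fun i => 2*(p i + 2*q i)/3 with hF
  set G : ι → ℝ := fun i => if p i + 2*q i = 0 then 0 else 3*(p i - q i)^2/(2*(p i + 2*q i)) with hG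
  have hmain : (∑ i ∈ s, |p i - q i|)^2 ≤ (∑ i ∈ s, F i) * (∑ i ∈ s, G i) := by
    apply Finset.sum_sq_le_sum_mul_sum_of_sq_eq_mul
    · intro i hi
      have := hp0 i hi; have := hq0 i hi
      simp only [hF]; positivity
    · intro i hi
      simp only [hG]
      by_cases h : p i + 2*q i = 0
      · rw [if_pos h]
      · rw [if_neg h]
        have h2 : 0 < 2*(p i + 2*q i) :=
          lt_of_le_of_ne (by nlinarith [hp0 i hi, hq0 i hi]) (by simp [eq_comm]; tauto)
        exact div_nonneg (by positivity) h2.le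
    · intro i hi
      simp only [hF, hG, sq_abs]
      by_cases h : p i + 2*q i = 0
      · rw [if_pos h]
        have hp : p i = 0 := by nlinarith [hp0 i hi, hq0 i hi]
        have hq : q i = 0 := by nlinarith [hp0 i hi, hq0 i hi]
        simp [hp, hq]
      · rw [if_neg h]
        rw [div_mul_div_comm, eq_div_iff (by intro h0; apply h; linarith)]
        ring
  have hFs : ∑ i ∈ s, F i = 2 := by
    have e : ∀ i ∈ s, F i = 2/3*p i + 4/3*q i := by intro i _; simp only [hF]; ring
    rw [Finset.sum_congr rfl e, Finset.sum_add_distrib, ← Finset.mul_sum, ← Finset.mul_sum,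
      hp1, hq1]
    norm_num
  have hGs : ∑ i ∈ s, G i ≤ ∑ i ∈ s, p i * Real.log (p i / q i) := by
    have key : ∀ i ∈ s, G i ≤ p i * Real.log (p i / q i) - p i + q i := by
      intro i hi
      simp only [hG]
      by_cases h : p i + 2*q i = 0
      · rw [if_pos h]
        have hp : p i = 0 := by nlinarith [hp0 i hi, hq0 i hi]
        have hq : q i = 0 := by nlinarith [hp0 i hi, hq0 i hi]
        simp [hp, hq]
      · rw [if_neg h]
        have hqpos : 0 < q i := by
          rcases (hq0 i hi).eq_or_lt with hq | hq
          · exact absurd (by rw [hac i hi hq.symm, ← hq]; ring) h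
          · exact hq
        have h2 : 0 < 2*(p i + 2*q i) := by nlinarith [hp0 i hi]
        rw [div_le_iff₀ h2]
        exact kl_pointwise (hp0 i hi) hqpos
    calc ∑ i ∈ s, G i ≤ ∑ i ∈ s, (p i * Real.log (p i / q i) - p i + q i) :=
          Finset.sum_le_sum key
      _ = ∑ i ∈ s, p i * Real.log (p i / q i) := by
          rw [Finset.sum_add_distrib, Finset.sum_sub_distrib, hp1, hq1]; ring
  have hGnn : 0 ≤ ∑ i ∈ s, G i := by
    apply Finset.sum_nonneg
    intro i hi
    simp only [hG]
    by_cases h : p i + 2*q i = 0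
    · rw [if_pos h]
    · rw [if_neg h]
      have h2 : 0 < 2*(p i + 2*q i) :=
        lt_of_le_of_ne (by nlinarith [hp0 i hi, hq0 i hi]) (by simp [eq_comm]; tauto)
      exact div_nonneg (by positivity) h2.le
  calc (∑ i ∈ s, |p i - q i|)^2 ≤ (∑ i ∈ s, F i) * (∑ i ∈ s, G i) := hmain
    _ ≤ 2 * ∑ i ∈ s, p i * Real.log (p i / q i) := by
        rw [hFs]; exact mul_le_mul_of_nonneg_left hGs (by norm_num)

def dl (A : Finset ℝ) (c q : ℝ → ℝ) : ℝ := 1 - ∑ z ∈ A, min (c z) (q z)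

def cpl (A : Finset ℝ) (c q : ℝ → ℝ) (x x' : ℝ) : ℝ :=
  (if x = x' then min (c x) (q x) else 0) +
  (if dl A c q = 0 then 0 else
    (c x - min (c x) (q x)) * (q x' - min (c x') (q x')) / dl A c q)

variable {A : Finset ℝ} {c q : ℝ → ℝ}

lemma dl_nonneg (hcs : ∑ x ∈ A, c x = 1) : 0 ≤ dl A c q := by
  have h : ∑ z ∈ A, min (c z) (q z) ≤ ∑ z ∈ A, c z :=
    Finset.sum_le_sum fun z _ => min_le_left _ _
  rw [hcs] at h
  simp only [dl]; linarith

lemma resc_sum (hcs : ∑ x ∈ A, c x = 1) :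
    ∑ x ∈ A, (c x - min (c x) (q x)) = dl A c q := by
  rw [Finset.sum_sub_distrib, hcs, dl]

lemma resq_sum (hqs : ∑ x ∈ A, q x = 1) :
    ∑ x ∈ A, (q x - min (c x) (q x)) = dl A c q := by
  rw [Finset.sum_sub_distrib, hqs, dl]

lemma dl_zero_eq (hcs : ∑ x ∈ A, c x = 1) (hqs : ∑ x ∈ A, q x = 1)
    (h : dl A c q = 0) : ∀ x ∈ A, min (c x) (q x) = c x ∧ min (c x) (q x) = q x := by
  have h1 : ∀ x ∈ A, c x - min (c x) (q x) = 0 :=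
    (Finset.sum_eq_zero_iff_of_nonneg fun z _ =>
      sub_nonneg.mpr (min_le_left _ _)).mp (by rw [resc_sum hcs, h])
  have h2 : ∀ x ∈ A, q x - min (c x) (q x) = 0 := by
    intro x hx
    exact (Finset.sum_eq_zero_iff_of_nonneg fun z _ =>
      sub_nonneg.mpr (min_le_right _ _)).mp (by rw [resq_sum hqs, h]) x hx
  intro x hx
  constructor
  · linarith [h1 x hx]
  · linarith [h2 x hx]

lemma cpl_nonneg (hc0 : ∀ x ∈ A, 0 ≤ c x) (hq0 : ∀ x ∈ A, 0 ≤ q x)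
    (hcs : ∑ x ∈ A, c x = 1) {x x' : ℝ} (hx : x ∈ A) : 0 ≤ cpl A c q x x' := by
  unfold cpl
  apply add_nonneg
  · split
    · exact le_min (hc0 x hx) (hq0 x hx)
    · exact le_refl 0
  · split
    · exact le_refl 0
    · rename_i h
      have hd : 0 < dl A c q := lt_of_le_of_ne (dl_nonneg hcs) (Ne.symm h)
      have h1 : 0 ≤ c x - min (c x) (q x) := sub_nonneg.mpr (min_le_left _ _)
      have h2 : 0 ≤ q x' - min (c x') (q x') := sub_nonneg.mpr (min_le_right _ _)
      positivity

lemma cpl_row (hcs : ∑ x ∈ A, c x = 1) (hqs : ∑ x ∈ A, q x = 1)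
    {x : ℝ} (hx : x ∈ A) : ∑ x' ∈ A, cpl A c q x x' = c x := by
  unfold cpl
  rw [Finset.sum_add_distrib]
  have e1 : ∑ x' ∈ A, (if x = x' then min (c x) (q x) else 0) = min (c x) (q x) := by
    rw [Finset.sum_ite_eq A x (fun _ => min (c x) (q x)), if_pos hx]
  rw [e1]
  by_cases h : dl A c q = 0
  · simp only [if_pos h, Finset.sum_const_zero, add_zero]
    exact (dl_zero_eq hcs hqs h x hx).1
  · simp only [if_neg h]
    rw [← Finset.sum_div, ← Finset.mul_sum, resq_sum hqs, mul_div_assoc,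
      div_self h, mul_one]
    ring

lemma cpl_col (hcs : ∑ x ∈ A, c x = 1) (hqs : ∑ x ∈ A, q x = 1)
    {x' : ℝ} (hx' : x' ∈ A) : ∑ x ∈ A, cpl A c q x x' = q x' := by
  unfold cpl
  rw [Finset.sum_add_distrib]
  have e1 : ∑ x ∈ A, (if x = x' then min (c x) (q x) else 0) = min (c x') (q x') := by
    rw [Finset.sum_ite_eq' A x' (fun z => min (c z) (q z)), if_pos hx']
  rw [e1]
  by_cases h : dl A c q = 0
  · simp only [if_pos h, Finset.sum_const_zero, add_zero]
    exact (dl_zero_eq hcs hqs h x' hx').2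
  · simp only [if_neg h]
    have e2 : ∑ x ∈ A, (c x - min (c x) (q x)) * (q x' - min (c x') (q x')) / dl A c q
        = q x' - min (c x') (q x') := by
      rw [← Finset.sum_div, ← Finset.sum_mul, resc_sum hcs, mul_comm, mul_div_assoc,
        div_self h, mul_one]
    rw [e2]
    ring

lemma cpl_eq_zero (hc0 : ∀ x ∈ A, 0 ≤ c x) (hcq : ∀ x ∈ A, q x = 0 → c x = 0)
    {x x' : ℝ} (hx : x ∈ A) (hx' : x' ∈ A) (h : q x = 0 ∨ q x' = 0) :
    cpl A c q x x' = 0 := by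
  unfold cpl
  rcases h with h | h
  · have hc : c x = 0 := hcq x hx h
    have hmin : min (c x) (q x) = 0 := by rw [hc, h, min_self]
    rw [hmin]
    simp only [ite_self, zero_add]
    split
    · rfl
    · norm_num
      exact Or.inl (Or.inl hc)
  · have hmin' : min (c x') (q x') = 0 := by
      rw [h]; exact min_eq_right (hc0 x' hx')
    have e2 : q x' - min (c x') (q x') = 0 := by rw [hmin', sub_zero, h]
    have e1 : (if x = x' then min (c x) (q x) else 0) = 0 := by
      split
      · rename_i he; subst he; rw [h]; exact min_eq_right (hc0 x hx)
      · rfl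
    rw [e1]
    split
    · rw [add_zero]
    · rw [e2, mul_zero, zero_div, add_zero]

lemma cpl_pos (hc0 : ∀ x ∈ A, 0 ≤ c x) (hq0 : ∀ x ∈ A, 0 ≤ q x)
    (hcq : ∀ x ∈ A, q x = 0 → c x = 0)
    {x x' : ℝ} (hx : x ∈ A) (hx' : x' ∈ A) (h : 0 < cpl A c q x x') :
    0 < q x ∧ 0 < q x' := by
  constructor
  · rcases (hq0 x hx).eq_or_lt with he | hl
    · exact absurd (cpl_eq_zero hc0 hcq hx hx' (Or.inl he.symm)) (by linarith)
    · exact hl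
  · rcases (hq0 x' hx').eq_or_lt with he | hl
    · exact absurd (cpl_eq_zero hc0 hcq hx hx' (Or.inr he.symm)) (by linarith)
    · exact hl

lemma cpl_diag_ge (hcs : ∑ x ∈ A, c x = 1) (x : ℝ) :
    min (c x) (q x) ≤ cpl A c q x x := by
  unfold cpl
  rw [if_pos rfl]
  apply le_add_of_nonneg_right
  split
  · exact le_refl 0
  · rename_i h
    have hd : 0 < dl A c q := lt_of_le_of_ne (dl_nonneg hcs) (Ne.symm h)
    have h1 : 0 ≤ c x - min (c x) (q x) := sub_nonneg.mpr (min_le_left _ _)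
    have h2 : 0 ≤ q x - min (c x) (q x) := sub_nonneg.mpr (min_le_right _ _)
    positivity

lemma cpl_offdiag_sum (hcs : ∑ x ∈ A, c x = 1) (hqs : ∑ x ∈ A, q x = 1) :
    ∑ x ∈ A, ∑ x' ∈ A, (if x = x' then 0 else cpl A c q x x') ≤ dl A c q := by
  have hrow : ∀ x ∈ A, ∑ x' ∈ A, (if x = x' then 0 else cpl A c q x x')
      = c x - cpl A c q x x := by
    intro x hx
    have e : ∀ x' ∈ A, (if x = x' then 0 else cpl A c q x x')
        = cpl A c q x x' - (if x = x' then cpl A c q x x' else 0) := by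
      intro x' _
      split <;> ring
    rw [Finset.sum_congr rfl e, Finset.sum_sub_distrib, cpl_row hcs hqs hx,
      Finset.sum_ite_eq A x (fun x' => cpl A c q x x'), if_pos hx]
  rw [Finset.sum_congr rfl hrow, Finset.sum_sub_distrib, hcs]
  have : ∑ x ∈ A, min (c x) (q x) ≤ ∑ x ∈ A, cpl A c q x x :=
    Finset.sum_le_sum fun x _ => cpl_diag_ge hcs x
  simp only [dl]
  linarith


lemma main_core (A B : Finset ℝ) (p : ℝ → ℝ → ℝ) (q r : ℝ → ℝ) (β : ℝ)
    (hp0 : ∀ x ∈ A, ∀ y ∈ B, 0 ≤ p x y)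
    (hq : ∀ x ∈ A, q x = ∑ y ∈ B, p x y)
    (hr : ∀ y ∈ B, r y = ∑ x ∈ A, p x y)
    (hq1 : ∑ x ∈ A, q x = 1)
    (hbdd : ∀ x ∈ A, 0 < q x → |x| ≤ 1)
    (hEX : ∑ x ∈ A, q x * x = 0)
    (hEY2 : ∑ y ∈ B, r y * y^2 ≤ 1)
    (hβ : ∑ x ∈ A, ∑ y ∈ B, p x y * (x*y) = β) :
    (∑ x ∈ A, q x * x^2) - Real.sqrt ((∑ x ∈ A, q x * x^2) * ((∑ x ∈ A, q x * x^2) - β^2))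
      ≤ Real.sqrt (2 * ∑ x ∈ A, ∑ y ∈ B, p x y * Real.log (p x y / (q x * r y))) := by
  classical
  set σ2 := ∑ x ∈ A, q x * x^2 with hσ2
  set I := ∑ x ∈ A, ∑ y ∈ B, p x y * Real.log (p x y / (q x * r y)) with hIdef
  set c : ℝ → ℝ → ℝ := fun y x => p x y / r y with hcdef
  set S := B.filter (fun y => 0 < r y) with hSdef
  set KL : ℝ → ℝ := fun y => ∑ x ∈ A, c y x * Real.log (c y x / q x) with hKLdef
  -- basic facts
  have hq0 : ∀ x ∈ A, 0 ≤ q x := fun x hx => by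
    rw [hq x hx]; exact Finset.sum_nonneg fun y hy => hp0 x hx y hy
  have hr0 : ∀ y ∈ B, 0 ≤ r y := fun y hy => by
    rw [hr y hy]; exact Finset.sum_nonneg fun x hx => hp0 x hx y hy
  have hSB : ∀ y ∈ S, y ∈ B := fun y hy => (Finset.mem_filter.mp hy).1
  have hSr : ∀ y ∈ S, 0 < r y := fun y hy => (Finset.mem_filter.mp hy).2
  have hpq : ∀ x ∈ A, ∀ y ∈ B, p x y ≤ q x := fun x hx y hy => by
    rw [hq x hx]; exact Finset.single_le_sum (fun y' hy' => hp0 x hx y' hy') hy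
  have hpr : ∀ x ∈ A, ∀ y ∈ B, p x y ≤ r y := fun x hx y hy => by
    rw [hr y hy]; exact Finset.single_le_sum (fun x' hx' => hp0 x' hx' y hy) hx
  have hrzero : ∀ y ∈ B, r y = 0 → ∀ x ∈ A, p x y = 0 := fun y hy h0 x hx =>
    le_antisymm (h0 ▸ hpr x hx y hy) (hp0 x hx y hy)
  have hc0 : ∀ y ∈ B, ∀ x ∈ A, 0 ≤ c y x := fun y hy x hx =>
    div_nonneg (hp0 x hx y hy) (hr0 y hy)
  have hcsum : ∀ y ∈ S, ∑ x ∈ A, c y x = 1 := by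
    intro y hy
    simp only [hcdef]
    rw [← Finset.sum_div, ← hr y (hSB y hy), div_self (hSr y hy).ne']
  have hcq : ∀ y ∈ S, ∀ x ∈ A, q x = 0 → c y x = 0 := by
    intro y hy x hx h0
    have hp' : p x y = 0 :=
      le_antisymm (h0 ▸ hpq x hx y (hSB y hy)) (hp0 x hx y (hSB y hy))
    simp only [hcdef, hp', zero_div]
  have hrc : ∀ y ∈ S, ∀ x ∈ A, r y * c y x = p x y := by
    intro y hy x hx
    simp only [hcdef]
    rw [mul_comm]
    exact div_mul_cancel₀ _ (hSr y hy).ne'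
  -- Pinsker per fiber
  have hpinsk : ∀ y ∈ S, (∑ x ∈ A, |c y x - q x|)^2 ≤ 2 * KL y := by
    intro y hy
    exact pinsker_fin A (c y) q (hc0 y (hSB y hy)) hq0 (hcsum y hy) hq1 (hcq y hy)
  have hKLnn : ∀ y ∈ S, 0 ≤ KL y := by
    intro y hy
    nlinarith [hpinsk y hy, sq_nonneg (∑ x ∈ A, |c y x - q x|)]
  -- I = sum over S of r y * KL y
  have hIKL : I = ∑ y ∈ S, r y * KL y := by
    rw [hIdef, Finset.sum_comm]
    have e1 : ∀ y ∈ B, ∑ x ∈ A, p x y * Real.log (p x y / (q x * r y)) = r y * KL y := by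
      intro y hy
      by_cases hyr : 0 < r y
      · have hyS : y ∈ S := Finset.mem_filter.mpr ⟨hy, hyr⟩
        rw [hKLdef, Finset.mul_sum]
        apply Finset.sum_congr rfl
        intro x hx
        have harg : c y x / q x = p x y / (q x * r y) := by
          simp only [hcdef]
          rw [div_div, mul_comm]
        rw [harg, ← mul_assoc, hrc y hyS x hx]
      · have h0 : r y = 0 := le_antisymm (not_lt.mp hyr) (hr0 y hy)
        rw [h0, zero_mul]
        apply Finset.sum_eq_zero
        intro x hx
        rw [hrzero y hy h0 x hx]
        simp
    rw [Finset.sum_congr rfl e1]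
    exact (Finset.sum_filter_of_ne fun y hy hne => by
      rcases (hr0 y hy).eq_or_lt with h | h
      · exact absurd (by rw [← h, zero_mul]) hne
      · exact h).symm
  -- sigma2 over S
  have hσ2S : σ2 = ∑ y ∈ S, ∑ x ∈ A, p x y * x^2 := by
    rw [hσ2]
    have e : ∀ x ∈ A, q x * x^2 = ∑ y ∈ B, p x y * x^2 := fun x hx => by
      rw [hq x hx, Finset.sum_mul]
    rw [Finset.sum_congr rfl e, Finset.sum_comm]
    exact (Finset.sum_filter_of_ne fun y hy hne => by
      rcases (hr0 y hy).eq_or_lt with h | h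
      · refine absurd (Finset.sum_eq_zero fun x hx => ?_) hne
        rw [hrzero y hy h.symm x hx, zero_mul]
      · exact h).symm
  have hβS : ∑ y ∈ S, ∑ x ∈ A, p x y * (x*y) = β := by
    have h1 : ∑ y ∈ S, ∑ x ∈ A, p x y * (x*y) = ∑ y ∈ B, ∑ x ∈ A, p x y * (x*y) :=
      Finset.sum_filter_of_ne fun y hy hne => by
        rcases (hr0 y hy).eq_or_lt with h | h
        · refine absurd (Finset.sum_eq_zero fun x hx => ?_) hne
          rw [hrzero y hy h.symm x hx, zero_mul]
        · exact h
    rw [h1, Finset.sum_comm, hβ]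
  have hY2S : ∑ y ∈ S, r y * y^2 ≤ 1 := by
    refine le_trans (Finset.sum_le_sum_of_subset_of_nonneg (Finset.filter_subset _ _)
      fun y hy _ => mul_nonneg (hr0 y hy) (sq_nonneg y)) hEY2
  have hrB : ∑ y ∈ B, r y = 1 := by
    rw [Finset.sum_congr rfl hr, Finset.sum_comm, ← hq1]
    exact Finset.sum_congr rfl fun x hx => (hq x hx).symm
  have hrS : ∑ y ∈ S, r y ≤ 1 := by
    rw [← hrB]
    exact Finset.sum_le_sum_of_subset_of_nonneg (Finset.filter_subset _ _)
      fun y hy _ => hr0 y hy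
  have hσ2nn : 0 ≤ σ2 := by
    rw [hσ2]
    exact Finset.sum_nonneg fun x hx => mul_nonneg (hq0 x hx) (sq_nonneg x)
  -- coupling facts per fiber
  have hπ0 : ∀ y ∈ S, ∀ x ∈ A, ∀ x' : ℝ, 0 ≤ cpl A (c y) q x x' := fun y hy x hx x' =>
    cpl_nonneg (hc0 y (hSB y hy)) hq0 (hcsum y hy) hx
  have hrow : ∀ y ∈ S, ∀ x ∈ A, ∑ x' ∈ A, cpl A (c y) q x x' = c y x := fun y hy x hx =>
    cpl_row (hcsum y hy) hq1 hx
  have hcol : ∀ y ∈ S, ∀ x' ∈ A, ∑ x ∈ A, cpl A (c y) q x x' = q x' := fun y hy x' hx' =>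
    cpl_col (hcsum y hy) hq1 hx'
  -- STEP A : σ2 - C ≤ 2 * D
  set D := ∑ y ∈ S, r y * dl A (c y) q with hDdef
  set C := ∑ y ∈ S, r y * (∑ x ∈ A, ∑ x' ∈ A, cpl A (c y) q x x' * (x * x')) with hCdef
  have hinner2 : ∀ y ∈ S, ∑ x ∈ A, p x y * x^2
      = r y * ∑ x ∈ A, ∑ x' ∈ A, cpl A (c y) q x x' * x^2 := by
    intro y hy
    rw [Finset.mul_sum]
    apply Finset.sum_congr rfl
    intro x hx
    rw [← Finset.sum_mul, hrow y hy x hx, ← mul_assoc, hrc y hy x hx]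
  have hstepA : σ2 - C ≤ 2 * D := by
    have hyterm : ∀ y ∈ S,
        r y * ∑ x ∈ A, ∑ x' ∈ A, cpl A (c y) q x x' * x^2
          - r y * (∑ x ∈ A, ∑ x' ∈ A, cpl A (c y) q x x' * (x * x'))
        ≤ r y * (2 * dl A (c y) q) := by
      intro y hy
      rw [← mul_sub]
      apply mul_le_mul_of_nonneg_left _ (hr0 y (hSB y hy))
      have hdiff : ∑ x ∈ A, ∑ x' ∈ A, cpl A (c y) q x x' * x^2
          - ∑ x ∈ A, ∑ x' ∈ A, cpl A (c y) q x x' * (x * x')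
          = ∑ x ∈ A, ∑ x' ∈ A, cpl A (c y) q x x' * (x^2 - x * x') := by
        rw [← Finset.sum_sub_distrib]
        apply Finset.sum_congr rfl
        intro x hx
        rw [← Finset.sum_sub_distrib]
        apply Finset.sum_congr rfl
        intro x' hx'
        ring
      rw [hdiff]
      have hbound : ∀ x ∈ A, ∀ x' ∈ A,
          cpl A (c y) q x x' * (x^2 - x * x')
            ≤ 2 * (if x = x' then 0 else cpl A (c y) q x x') := by
        intro x hx x' hx'
        by_cases hxx : x = x'
        · subst hxx
          rw [if_pos rfl]
          have : x^2 - x * x = 0 := by ring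
          rw [this, mul_zero, mul_zero]
        · rw [if_neg hxx]
          rcases (hπ0 y hy x hx x').eq_or_lt with h | h
          · rw [← h]
            simp
          · obtain ⟨hqx, hqx'⟩ := cpl_pos (hc0 y (hSB y hy)) hq0 (hcq y hy) hx hx' h
            have h1 := abs_le.mp (hbdd x hx hqx)
            have h2 := abs_le.mp (hbdd x' hx' hqx')
            have hsq : x^2 - x * x' ≤ 2 := by nlinarith
            nlinarith
      calc ∑ x ∈ A, ∑ x' ∈ A, cpl A (c y) q x x' * (x^2 - x * x')
          ≤ ∑ x ∈ A, ∑ x' ∈ A, 2 * (if x = x' then 0 else cpl A (c y) q x x') :=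
            Finset.sum_le_sum fun x hx => Finset.sum_le_sum fun x' hx' => hbound x hx x' hx'
        _ = 2 * ∑ x ∈ A, ∑ x' ∈ A, (if x = x' then 0 else cpl A (c y) q x x') := by
            rw [Finset.mul_sum]
            exact Finset.sum_congr rfl fun x hx => by rw [Finset.mul_sum]
        _ ≤ 2 * dl A (c y) q := by
            have := cpl_offdiag_sum (c := c y) (q := q) (hcsum y hy) hq1
            linarith
    calc σ2 - C = ∑ y ∈ S, (r y * ∑ x ∈ A, ∑ x' ∈ A, cpl A (c y) q x x' * x^2
          - r y * (∑ x ∈ A, ∑ x' ∈ A, cpl A (c y) q x x' * (x * x'))) := by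
          rw [Finset.sum_sub_distrib, hCdef, hσ2S]
          congr 1
          exact Finset.sum_congr rfl hinner2
      _ ≤ ∑ y ∈ S, r y * (2 * dl A (c y) q) := Finset.sum_le_sum hyterm
      _ = 2 * D := by
          rw [hDdef, Finset.mul_sum]
          exact Finset.sum_congr rfl fun y hy => by ring
  -- STEP B : C ≤ sqrt (σ2 * (σ2 - β^2))
  set T := S ×ˢ (A ×ˢ A) with hTdef
  set w : ℝ × ℝ × ℝ → ℝ := fun z => r z.1 * cpl A (c z.1) q z.2.1 z.2.2 with hwdef
  have hT : ∀ g : ℝ → ℝ → ℝ → ℝ, ∑ z ∈ T, w z * g z.1 z.2.1 z.2.2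
      = ∑ y ∈ S, r y * ∑ x ∈ A, ∑ x' ∈ A, cpl A (c y) q x x' * g y x x' := by
    intro g
    rw [hTdef, Finset.sum_product]
    apply Finset.sum_congr rfl
    intro y hy
    rw [Finset.sum_product, Finset.mul_sum]
    apply Finset.sum_congr rfl
    intro x hx
    rw [Finset.mul_sum]
    apply Finset.sum_congr rfl
    intro x' hx'
    simp only [hwdef]
    ring
  have hw0 : ∀ z ∈ T, 0 ≤ w z := by
    intro z hz
    rw [hTdef, Finset.mem_product] at hz
    obtain ⟨hz1, hz2⟩ := hz
    rw [Finset.mem_product] at hz2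
    exact mul_nonneg (hr0 z.1 (hSB z.1 hz1)) (hπ0 z.1 hz1 z.2.1 hz2.1 z.2.2)
  -- marginal computations
  have hMx2 : ∀ y ∈ S, ∑ x ∈ A, ∑ x' ∈ A, cpl A (c y) q x x' * (x^2) = ∑ x ∈ A, c y x * x^2 := by
    intro y hy
    apply Finset.sum_congr rfl
    intro x hx
    rw [← Finset.sum_mul, hrow y hy x hx]
  have hMxy : ∀ y ∈ S, ∑ x ∈ A, ∑ x' ∈ A, cpl A (c y) q x x' * (x*y) = ∑ x ∈ A, c y x * (x*y) := by
    intro y hy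
    apply Finset.sum_congr rfl
    intro x hx
    rw [← Finset.sum_mul, hrow y hy x hx]
  have hM1 : ∀ y ∈ S, ∑ x ∈ A, ∑ x' ∈ A, cpl A (c y) q x x' * 1 = 1 := by
    intro y hy
    have : ∀ x ∈ A, ∑ x' ∈ A, cpl A (c y) q x x' * 1 = c y x := by
      intro x hx
      rw [← hrow y hy x hx]
      exact Finset.sum_congr rfl fun x' _ => mul_one _
    rw [Finset.sum_congr rfl this, hcsum y hy]
  have hMcol : ∀ y ∈ S, ∀ f : ℝ → ℝ, ∑ x ∈ A, ∑ x' ∈ A, cpl A (c y) q x x' * f x'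
      = ∑ x' ∈ A, q x' * f x' := by
    intro y hy f
    rw [Finset.sum_comm]
    apply Finset.sum_congr rfl
    intro x' hx'
    rw [← Finset.sum_mul, hcol y hy x' hx']
  -- express C over T
  have hCT : C = ∑ z ∈ T, w z * (z.2.1 * z.2.2) := (hT fun y x x' => x * x').symm
  -- split C = T1 + β * T2
  set T1 := ∑ z ∈ T, w z * (z.2.2 * (z.2.1 - β * z.1)) with hT1def
  have hsplit : C = T1 + β * ∑ z ∈ T, w z * (z.2.2 * z.1) := by
    rw [hCT, hT1def, Finset.mul_sum, ← Finset.sum_add_distrib]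
    apply Finset.sum_congr rfl
    intro z hz
    ring
  have hT2 : ∑ z ∈ T, w z * (z.2.2 * z.1) = 0 := by
    rw [hT fun y x x' => x' * y]
    apply Finset.sum_eq_zero
    intro y hy
    have e0 : ∑ x ∈ A, ∑ x' ∈ A, cpl A (c y) q x x' * (x' * y)
        = (∑ x ∈ A, ∑ x' ∈ A, cpl A (c y) q x x' * x') * y := by
      rw [Finset.sum_mul]
      apply Finset.sum_congr rfl
      intro x hx
      rw [Finset.sum_mul]
      exact Finset.sum_congr rfl fun x' _ => by ring
    rw [e0, hMcol y hy fun x' => x', hEX, zero_mul, mul_zero]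
  have hCT1 : C = T1 := by rw [hsplit, hT2, mul_zero, add_zero]
  -- the two second moments
  have hU : ∑ z ∈ T, w z * z.2.2^2 ≤ σ2 := by
    have e : ∑ z ∈ T, w z * z.2.2^2 = (∑ y ∈ S, r y) * σ2 := by
      rw [hT fun y x x' => x'^2, Finset.sum_mul]
      apply Finset.sum_congr rfl
      intro y hy
      rw [hMcol y hy fun x' => x'^2, hσ2]
    rw [e]
    nlinarith
  have hx2σ : ∀ y ∈ S, r y * ∑ x ∈ A, c y x * x^2 = ∑ x ∈ A, p x y * x^2 := by
    intro y hy
    rw [Finset.mul_sum]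
    exact Finset.sum_congr rfl fun x hx => by rw [← mul_assoc, hrc y hy x hx]
  have hV : ∑ z ∈ T, w z * (z.2.1 - β * z.1)^2 ≤ σ2 - β^2 := by
    have esplit : ∀ z ∈ T, w z * (z.2.1 - β * z.1)^2
        = w z * z.2.1^2 - 2*β*(w z * (z.2.1 * z.1)) + β^2*(w z * (z.1^2)) := by
      intro z hz
      ring
    rw [Finset.sum_congr rfl esplit, Finset.sum_add_distrib, Finset.sum_sub_distrib,
      ← Finset.mul_sum, ← Finset.mul_sum]
    have e1 : ∑ z ∈ T, w z * z.2.1^2 = σ2 := by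
      rw [hT fun y x x' => x^2, hσ2S]
      apply Finset.sum_congr rfl
      intro y hy
      rw [hMx2 y hy, hx2σ y hy]
    have e2 : ∑ z ∈ T, w z * (z.2.1 * z.1) = β := by
      rw [hT fun y x x' => x * y, ← hβS]
      apply Finset.sum_congr rfl
      intro y hy
      rw [hMxy y hy, Finset.mul_sum]
      exact Finset.sum_congr rfl fun x hx => by rw [← mul_assoc, hrc y hy x hx]
    have e3 : ∑ z ∈ T, w z * z.1^2 ≤ 1 := by
      have : ∑ z ∈ T, w z * z.1^2 = ∑ y ∈ S, r y * y^2 := by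
        rw [hT fun y x x' => y^2]
        apply Finset.sum_congr rfl
        intro y hy
        have : ∑ x ∈ A, ∑ x' ∈ A, cpl A (c y) q x x' * y^2
            = (∑ x ∈ A, ∑ x' ∈ A, cpl A (c y) q x x' * 1) * y^2 := by
          rw [Finset.sum_mul]
          apply Finset.sum_congr rfl
          intro x hx
          rw [Finset.sum_mul]
          exact Finset.sum_congr rfl fun x' hx' => by ring
        rw [this, hM1 y hy, one_mul]
      rw [this]
      exact hY2S
    rw [e1, e2]
    nlinarith [sq_nonneg β]
  have hVnn : 0 ≤ ∑ z ∈ T, w z * (z.2.1 - β * z.1)^2 :=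
    Finset.sum_nonneg fun z hz => mul_nonneg (hw0 z hz) (sq_nonneg _)
  have hCS : T1^2 ≤ (∑ z ∈ T, w z * z.2.2^2) * (∑ z ∈ T, w z * (z.2.1 - β * z.1)^2) := by
    rw [hT1def]
    apply Finset.sum_sq_le_sum_mul_sum_of_sq_eq_mul
    · exact fun z hz => mul_nonneg (hw0 z hz) (sq_nonneg _)
    · exact fun z hz => mul_nonneg (hw0 z hz) (sq_nonneg _)
    · intro z hz
      ring
  have hstepB : C ≤ Real.sqrt (σ2 * (σ2 - β^2)) := by
    rw [hCT1]
    apply Real.le_sqrt_of_sq_le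
    calc T1^2 ≤ (∑ z ∈ T, w z * z.2.2^2) * (∑ z ∈ T, w z * (z.2.1 - β * z.1)^2) := hCS
      _ ≤ σ2 * (σ2 - β^2) := mul_le_mul hU hV hVnn hσ2nn
  -- STEP C : 2 * D ≤ sqrt (2 * I)
  have habs : ∀ y ∈ S, ∑ x ∈ A, |c y x - q x| = 2 * dl A (c y) q := by
    intro y hy
    have e : ∀ x ∈ A, |c y x - q x| = c y x + q x - 2 * min (c y x) (q x) := by
      intro x hx
      rcases le_total (c y x) (q x) with h | h
      · rw [abs_of_nonpos (by linarith), min_eq_left h]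
        ring
      · rw [abs_of_nonneg (by linarith), min_eq_right h]
        ring
    rw [Finset.sum_congr rfl e, Finset.sum_sub_distrib, Finset.sum_add_distrib,
      hcsum y hy, hq1, ← Finset.mul_sum]
    simp only [dl]
    ring
  have hD2 : 2 * D = ∑ y ∈ S, r y * ∑ x ∈ A, |c y x - q x| := by
    rw [hDdef, Finset.mul_sum]
    apply Finset.sum_congr rfl
    intro y hy
    rw [habs y hy]
    ring
  have hDCS : (2 * D)^2 ≤ (∑ y ∈ S, 2 * r y) * (∑ y ∈ S, r y * (∑ x ∈ A, |c y x - q x|)^2 / 2) := by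
    rw [hD2]
    apply Finset.sum_sq_le_sum_mul_sum_of_sq_eq_mul
    · intro y hy
      have := hr0 y (hSB y hy)
      positivity
    · intro y hy
      have := hr0 y (hSB y hy)
      positivity
    · intro y hy
      ring
  have h2r : ∑ y ∈ S, 2 * r y ≤ 2 := by
    rw [← Finset.mul_sum]
    linarith
  have hgI : ∑ y ∈ S, r y * (∑ x ∈ A, |c y x - q x|)^2 / 2 ≤ I := by
    rw [hIKL]
    apply Finset.sum_le_sum
    intro y hy
    have h1 := hpinsk y hy
    have h2 := hr0 y (hSB y hy)
    have h3 : (∑ x ∈ A, |c y x - q x|)^2 / 2 ≤ KL y := by linarith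
    calc r y * (∑ x ∈ A, |c y x - q x|)^2 / 2
        = r y * ((∑ x ∈ A, |c y x - q x|)^2 / 2) := by ring
      _ ≤ r y * KL y := mul_le_mul_of_nonneg_left h3 h2
  have hgnn : 0 ≤ ∑ y ∈ S, r y * (∑ x ∈ A, |c y x - q x|)^2 / 2 :=
    Finset.sum_nonneg fun y hy => by
      have := hr0 y (hSB y hy)
      positivity
  have hstepC : 2 * D ≤ Real.sqrt (2 * I) := by
    apply Real.le_sqrt_of_sq_le
    calc (2*D)^2 ≤ (∑ y ∈ S, 2 * r y) * (∑ y ∈ S, r y * (∑ x ∈ A, |c y x - q x|)^2 / 2) := hDCS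
      _ ≤ 2 * I := mul_le_mul h2r hgI hgnn (by norm_num)
  -- conclusion
  have hfinal := Real.sqrt_nonneg (σ2 * (σ2 - β^2))
  linarith [hstepA, hstepB, hstepC]

theorem coupling_pinsker_information_bound
    {Ω : Type*} [Fintype Ω] (μ : Ω → ℝ)
    (hμ0 : ∀ ω, 0 ≤ μ ω) (hμ1 : ∑ ω, μ ω = 1)
    (X Y : Ω → ℝ) (β : ℝ)
    -- `|X| ≤ 1` almost surely
    (hXbdd : ∀ ω, 0 < μ ω → |X ω| ≤ 1)
    (hEX : ∑ ω, μ ω * X ω = 0)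
    (hEY2 : ∑ ω, μ ω * (Y ω) ^ 2 ≤ 1)
    (hEXY : ∑ ω, μ ω * (X ω * Y ω) = β) :
    (∑ ω, μ ω * (X ω) ^ 2) -
        Real.sqrt ((∑ ω, μ ω * (X ω) ^ 2) * ((∑ ω, μ ω * (X ω) ^ 2) - β ^ 2)) ≤
      Real.sqrt (2 * miFin μ X Y) := by
  classical
  set A := Finset.univ.image X with hA
  set B := Finset.univ.image Y with hB
  set p : ℝ → ℝ → ℝ := fun x y => ∑ ω ∈ Finset.univ.filter (fun ω => X ω = x ∧ Y ω = y), μ ω with hp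
  set q : ℝ → ℝ := fun x => ∑ ω ∈ Finset.univ.filter (fun ω => X ω = x), μ ω with hqd
  set r : ℝ → ℝ := fun y => ∑ ω ∈ Finset.univ.filter (fun ω => Y ω = y), μ ω with hrd
  -- marginal fiberization
  have F2 : ∀ g : ℝ → ℝ, ∑ x ∈ A, q x * g x = ∑ ω, μ ω * g (X ω) := by
    intro g
    have key := Finset.sum_fiberwise_of_maps_to (s := Finset.univ) (t := A) (g := X)
      (fun ω _ => Finset.mem_image_of_mem X (Finset.mem_univ ω)) (fun ω => μ ω * g (X ω))
    rw [← key]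
    apply Finset.sum_congr rfl
    intro x hx
    rw [hqd, Finset.sum_mul]
    apply Finset.sum_congr rfl
    intro ω hω
    rw [(Finset.mem_filter.mp hω).2]
  have F3 : ∀ g : ℝ → ℝ, ∑ y ∈ B, r y * g y = ∑ ω, μ ω * g (Y ω) := by
    intro g
    have key := Finset.sum_fiberwise_of_maps_to (s := Finset.univ) (t := B) (g := Y)
      (fun ω _ => Finset.mem_image_of_mem Y (Finset.mem_univ ω)) (fun ω => μ ω * g (Y ω))
    rw [← key]
    apply Finset.sum_congr rfl
    intro y hy
    rw [hrd, Finset.sum_mul]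
    apply Finset.sum_congr rfl
    intro ω hω
    rw [(Finset.mem_filter.mp hω).2]
  have F1 : ∀ f : ℝ → ℝ → ℝ, ∑ x ∈ A, ∑ y ∈ B, p x y * f x y = ∑ ω, μ ω * f (X ω) (Y ω) := by
    intro f
    have key := Finset.sum_fiberwise_of_maps_to (s := Finset.univ) (t := A ×ˢ B) (g := fun ω => (X ω, Y ω))
      (fun ω _ => Finset.mem_product.mpr
        ⟨Finset.mem_image_of_mem X (Finset.mem_univ ω), Finset.mem_image_of_mem Y (Finset.mem_univ ω)⟩)
      (fun ω => μ ω * f (X ω) (Y ω))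
    rw [← key, Finset.sum_product]
    apply Finset.sum_congr rfl
    intro x hx
    apply Finset.sum_congr rfl
    intro y hy
    rw [hp, Finset.sum_mul]
    have hfe : Finset.univ.filter (fun ω => X ω = x ∧ Y ω = y)
        = Finset.univ.filter (fun ω => (X ω, Y ω) = (x, y)) := by
      apply Finset.filter_congr
      intro ω _
      simp [Prod.ext_iff]
    rw [hfe]
    apply Finset.sum_congr rfl
    intro ω hω
    have h2 := (Finset.mem_filter.mp hω).2
    simp only [Prod.mk.injEq] at h2
    rw [h2.1, h2.2]
  have F4 : ∀ x ∈ A, q x = ∑ y ∈ B, p x y := by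
    intro x hx
    have key := Finset.sum_fiberwise_of_maps_to
      (s := Finset.univ.filter (fun ω => X ω = x)) (t := B) (g := Y)
      (fun ω _ => Finset.mem_image_of_mem Y (Finset.mem_univ ω)) μ
    have hqx : q x = ∑ ω ∈ Finset.univ.filter (fun ω => X ω = x), μ ω := rfl
    rw [hqx, ← key]
    apply Finset.sum_congr rfl
    intro y hy
    rw [Finset.filter_filter]
  have F5 : ∀ y ∈ B, r y = ∑ x ∈ A, p x y := by
    intro y hy
    have key := Finset.sum_fiberwise_of_maps_to
      (s := Finset.univ.filter (fun ω => Y ω = y)) (t := A) (g := X)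
      (fun ω _ => Finset.mem_image_of_mem X (Finset.mem_univ ω)) μ
    have hry : r y = ∑ ω ∈ Finset.univ.filter (fun ω => Y ω = y), μ ω := rfl
    rw [hry, ← key]
    apply Finset.sum_congr rfl
    intro x hx
    rw [Finset.filter_filter]
    have he : Finset.univ.filter (fun ω => Y ω = y ∧ X ω = x)
        = Finset.univ.filter (fun ω => X ω = x ∧ Y ω = y) :=
      Finset.filter_congr fun ω _ => and_comm
    rw [he]
  have hp0 : ∀ x ∈ A, ∀ y ∈ B, 0 ≤ p x y := by
    intro x _ y _
    rw [hp]
    exact Finset.sum_nonneg fun ω _ => hμ0 ω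
  have hq1 : ∑ x ∈ A, q x = 1 := by
    have h := F2 (fun _ => 1)
    simp only [mul_one] at h
    rw [h, hμ1]
  have hbdd : ∀ x ∈ A, 0 < q x → |x| ≤ 1 := by
    intro x hx hpos
    have hex : ∃ ω ∈ Finset.univ.filter (fun ω => X ω = x), 0 < μ ω := by
      by_contra h
      push_neg at h
      have hz : ∑ ω ∈ Finset.univ.filter (fun ω => X ω = x), μ ω = 0 :=
        Finset.sum_eq_zero fun ω hω => le_antisymm (h ω hω) (hμ0 ω)
      rw [hqd] at hpos
      simp only [hz] at hpos
      exact lt_irrefl 0 hpos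
    obtain ⟨ω, hω, hμpos⟩ := hex
    rw [← (Finset.mem_filter.mp hω).2]
    exact hXbdd ω hμpos
  have hEX2 : ∑ x ∈ A, q x * x = 0 := by rw [F2 (fun t => t)]; exact hEX
  have hEY22 : ∑ y ∈ B, r y * y^2 ≤ 1 := by rw [F3 (fun t => t^2)]; exact hEY2
  have hβ2 : ∑ x ∈ A, ∑ y ∈ B, p x y * (x*y) = β := by
    rw [F1 (fun x y => x*y)]; exact hEXY
  have hσ2eq : ∑ x ∈ A, q x * x^2 = ∑ ω, μ ω * (X ω)^2 := F2 (fun t => t^2)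
  have hmi : miFin μ X Y = ∑ x ∈ A, ∑ y ∈ B, p x y * Real.log (p x y / (q x * r y)) := by
    unfold miFin
    rfl
  rw [← hσ2eq, hmi]
  exact main_core A B p q r β hp0 F4 F5 hq1 hbdd hEX2 hEY22 hβ2

end
end

section
/- Let P be uniformly distributed on [−1/3, 1/3], and conditionally on P = p let X_1, …, X_m be i.i.d. ±1-valued random variables with mean p. Let f : {±1}^m → [−1/3, 1/3] satisfy E[(f(X_{1:m}) − P)²] ≤ ε for some ε ≤ 1/27. Then E[ ((1 − 9P²)/(9 − 9P²)) · (f(X_{1:m}) − P) · Σ_{i=1}^m (X_i − P) ] ≥ 1/27 − ε; in particular, when ε ≤ 1/54 this correlation is at least 1/54. -/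
/-!
Statement 12: let `P ∼ U[−1/3,1/3]` and, conditionally on `P = p`, let `X_1,…,X_m`
be i.i.d. `±1`-valued with mean `p`.  If `f : {±1}^m → [−1/3,1/3]` satisfies
`E[(f(X)−P)²] ≤ ε` with `ε ≤ 1/27`, then
`E[ (1−9P²)/(9−9P²) · (f(X)−P) · Σᵢ(Xᵢ−P) ] ≥ 1/27 − ε`;
in particular, when `ε ≤ 1/54` this correlation is at least `1/54`.

The expectation is written explicitly: the uniform density on `[−1/3,1/3]` is `3/2`,
`±1`-valued variables are encoded by `Bool` via `pm1`, and conditionally on `p` the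
probability of the outcome `x : Fin m → Bool` is `∏ i, (1 + pm1 (x i) * p)/2`.
-/

open Finset Real

noncomputable section

namespace St12
variable {m : ℕ}

lemma pm1_sq (b : Bool) : pm1 b ^ 2 = 1 := by cases b <;> norm_num [pm1]

def q (x : Fin m → Bool) (p : ℝ) : ℝ := ∏ i, (1 + pm1 (x i) * p) / 2

def q' (x : Fin m → Bool) (p : ℝ) : ℝ :=
  ∑ i, (∏ j ∈ Finset.univ.erase i, (1 + pm1 (x j) * p) / 2) * (pm1 (x i) / 2)

lemma hasDerivAt_q (x : Fin m → Bool) (p : ℝ) : HasDerivAt (q x) (q' x p) p := by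
  have h : ∀ i ∈ (univ : Finset (Fin m)),
      HasDerivAt (fun p : ℝ => (1 + pm1 (x i) * p) / 2) (pm1 (x i) / 2) p := by
    intro i _
    simpa using (((hasDerivAt_id p).const_mul (pm1 (x i))).const_add 1).div_const 2
  have H := HasDerivAt.fun_finsetProd h
  simp only [smul_eq_mul] at H
  exact H

lemma q_cont (x : Fin m → Bool) : Continuous (q x) := by
  unfold q; fun_prop

lemma q'_cont (x : Fin m → Bool) : Continuous (q' x) := by
  unfold q'; fun_prop

lemma q_nonneg (x : Fin m → Bool) {p : ℝ} (h1 : -1 ≤ p) (h2 : p ≤ 1) : 0 ≤ q x p := by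
  apply Finset.prod_nonneg
  intro i _
  cases x i <;> simp [pm1] <;> linarith

lemma q_sum (p : ℝ) : ∑ x : Fin m → Bool, q x p = 1 := by
  have := Finset.prod_univ_sum (fun _ : Fin m => (univ : Finset Bool))
    (fun _ b => (1 + pm1 b * p) / 2)
  simp only [Fintype.piFinset_univ] at this
  unfold q
  rw [← this]
  refine Finset.prod_eq_one fun i _ => ?_
  rw [Fintype.sum_bool]
  norm_num [pm1]
  ring

lemma q'_sum (p : ℝ) : ∑ x : Fin m → Bool, q' x p = 0 := by
  have hd : HasDerivAt (fun p => ∑ x : Fin m → Bool, q x p)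
      (∑ x : Fin m → Bool, q' x p) p := HasDerivAt.fun_sum (fun x _ => hasDerivAt_q x p)
  have he : (fun p => ∑ x : Fin m → Bool, q x p) = fun _ => (1 : ℝ) := funext q_sum
  rw [he] at hd
  exact hd.unique (hasDerivAt_const p 1)

lemma key (x : Fin m → Bool) (p : ℝ) :
    q x p * (∑ i, (pm1 (x i) - p)) = (1 - p ^ 2) * q' x p := by
  unfold q q'
  rw [Finset.mul_sum, Finset.mul_sum]
  refine Finset.sum_congr rfl fun i _ => ?_
  rw [← Finset.prod_erase_mul univ _ (mem_univ i)]
  have h := pm1_sq (x i)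
  linear_combination ((∏ j ∈ Finset.univ.erase i, (1 + pm1 (x j) * p) / 2) * p / 2) * h


variable (f : (Fin m → Bool) → ℝ)

def G (p : ℝ) : ℝ := ∑ x : Fin m → Bool, q x p * f x
def D (p : ℝ) : ℝ := ∑ x : Fin m → Bool, q' x p * f x
def F (p : ℝ) : ℝ := (1 - 9 * p ^ 2) / 9 * (G f p - p)
def F' (p : ℝ) : ℝ := -(2 * p) * (G f p - p) + (1 - 9 * p ^ 2) / 9 * (D f p - 1)

lemma G_cont : Continuous (G f) := by
  unfold G; exact continuous_finset_sum _ fun x _ => (q_cont x).mul continuous_const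

lemma D_cont : Continuous (D f) := by
  unfold D; exact continuous_finset_sum _ fun x _ => (q'_cont x).mul continuous_const

lemma F'_cont : Continuous (F' f) := by
  unfold F'
  have := G_cont f
  have := D_cont f
  fun_prop

lemma hasDerivAt_G (p : ℝ) : HasDerivAt (G f) (D f p) p := by
  unfold G D
  exact HasDerivAt.fun_sum fun x _ => (hasDerivAt_q x p).mul_const (f x)

lemma hasDerivAt_F (p : ℝ) : HasDerivAt (F f) (F' f p) p := by
  have h1 : HasDerivAt (fun p : ℝ => (1 - 9 * p ^ 2) / 9) (-(2 * p)) p := by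
    have := (((hasDerivAt_pow 2 p).const_mul 9).const_sub 1).div_const 9
    refine this.congr_deriv ?_
    ring
  have h2 : HasDerivAt (fun p => G f p - p) (D f p - 1) p :=
    (hasDerivAt_G f p).sub (hasDerivAt_id p)
  have := h1.fun_mul h2
  unfold F F'
  convert this using 1

lemma pointwise {p : ℝ} (hp : (9 : ℝ) - 9 * p ^ 2 ≠ 0) :
    ∑ x : Fin m → Bool,
        q x p * ((1 - 9 * p ^ 2) / (9 - 9 * p ^ 2) * (f x - p) * (∑ i, (pm1 (x i) - p))) =
      F' f p + 2 * p * (G f p - p) + (1 - 9 * p ^ 2) / 9 := by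
  have hw : (1 - 9 * p ^ 2) / (9 - 9 * p ^ 2) * (1 - p ^ 2) = (1 - 9 * p ^ 2) / 9 := by
    have h1 : (1 : ℝ) - p ^ 2 ≠ 0 := by intro h; apply hp; linarith
    field_simp
  have step : ∀ x : Fin m → Bool,
      q x p * ((1 - 9 * p ^ 2) / (9 - 9 * p ^ 2) * (f x - p) * (∑ i, (pm1 (x i) - p))) =
        (1 - 9 * p ^ 2) / 9 * (q' x p * f x) - (1 - 9 * p ^ 2) / 9 * p * q' x p := by
    intro x
    have hk := key x p
    linear_combination ((1 - 9 * p ^ 2) / (9 - 9 * p ^ 2) * (f x - p)) * hk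
      + ((f x - p) * q' x p) * hw
  rw [Finset.sum_congr rfl fun x _ => step x, Finset.sum_sub_distrib, ← Finset.mul_sum,
    ← Finset.mul_sum, q'_sum]
  unfold F' D
  ring

end St12

open St12

theorem accurate_estimators_correlate_with_empirical_sum (m : ℕ)
    (f : (Fin m → Bool) → ℝ)
    (hf : ∀ x, f x ∈ Set.Icc (-(1 / 3) : ℝ) (1 / 3))
    (ε : ℝ) (hε : ε ≤ 1 / 27)
    (hacc : (3 / 2 : ℝ) *
        ∫ p in (-(1 / 3) : ℝ)..(1 / 3),
          ∑ x : Fin m → Bool,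
            (∏ i, (1 + pm1 (x i) * p) / 2) * (f x - p) ^ 2 ≤ ε) :
    (3 / 2 : ℝ) *
        ∫ p in (-(1 / 3) : ℝ)..(1 / 3),
          ∑ x : Fin m → Bool,
            (∏ i, (1 + pm1 (x i) * p) / 2) *
              ((1 - 9 * p ^ 2) / (9 - 9 * p ^ 2) * (f x - p) * (∑ i, (pm1 (x i) - p))) ≥
      1 / 27 - ε ∧
    (ε ≤ 1 / 54 →
      (3 / 2 : ℝ) *
          ∫ p in (-(1 / 3) : ℝ)..(1 / 3),
            ∑ x : Fin m → Bool,
              (∏ i, (1 + pm1 (x i) * p) / 2) *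
                ((1 - 9 * p ^ 2) / (9 - 9 * p ^ 2) * (f x - p) * (∑ i, (pm1 (x i) - p))) ≥
        1 / 54) := by
  have cF' := F'_cont f
  have cG := G_cont f
  have i1 : IntervalIntegrable (F' f) MeasureTheory.volume (-(1/3) : ℝ) (1/3) :=
    cF'.intervalIntegrable _ _
  have i2 : IntervalIntegrable (fun p => 2 * p * (G f p - p)) MeasureTheory.volume
      (-(1/3) : ℝ) (1/3) := by
    apply Continuous.intervalIntegrable; fun_prop
  have i3 : IntervalIntegrable (fun p : ℝ => (1 - 9 * p ^ 2) / 9) MeasureTheory.volume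
      (-(1/3) : ℝ) (1/3) := by
    apply Continuous.intervalIntegrable; fun_prop
  have i4 : IntervalIntegrable (fun p : ℝ => -p ^ 2 - (G f p - p) ^ 2) MeasureTheory.volume
      (-(1/3) : ℝ) (1/3) := by
    apply Continuous.intervalIntegrable; fun_prop
  have i5 : IntervalIntegrable (fun p : ℝ => (G f p - p) ^ 2) MeasureTheory.volume
      (-(1/3) : ℝ) (1/3) := by
    apply Continuous.intervalIntegrable; fun_prop
  have i6 : IntervalIntegrable
      (fun p : ℝ => ∑ x : Fin m → Bool, (∏ i, (1 + pm1 (x i) * p) / 2) * (f x - p) ^ 2)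
      MeasureTheory.volume (-(1/3) : ℝ) (1/3) := by
    apply Continuous.intervalIntegrable
    refine continuous_finset_sum _ fun x _ => ?_
    fun_prop
  have i7 : IntervalIntegrable (fun p : ℝ => p ^ 2) MeasureTheory.volume
      (-(1/3) : ℝ) (1/3) := by
    apply Continuous.intervalIntegrable; fun_prop
  -- rewrite the main integral
  have hIS : (∫ p in (-(1 / 3) : ℝ)..(1 / 3),
        ∑ x : Fin m → Bool,
          (∏ i, (1 + pm1 (x i) * p) / 2) *
            ((1 - 9 * p ^ 2) / (9 - 9 * p ^ 2) * (f x - p) * (∑ i, (pm1 (x i) - p)))) =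
      ∫ p in (-(1 / 3) : ℝ)..(1 / 3),
        (F' f p + 2 * p * (G f p - p) + (1 - 9 * p ^ 2) / 9) := by
    apply intervalIntegral.integral_congr
    intro p hp
    rw [Set.uIcc_of_le (by norm_num)] at hp
    obtain ⟨h1, h2⟩ := hp
    have h9 : (9 : ℝ) - 9 * p ^ 2 ≠ 0 := by nlinarith
    exact pointwise f h9
  have hsplit : (∫ p in (-(1 / 3) : ℝ)..(1 / 3),
        (F' f p + 2 * p * (G f p - p) + (1 - 9 * p ^ 2) / 9)) =
      (∫ p in (-(1 / 3) : ℝ)..(1 / 3), F' f p) +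
        (∫ p in (-(1 / 3) : ℝ)..(1 / 3), 2 * p * (G f p - p)) +
        ∫ p in (-(1 / 3) : ℝ)..(1 / 3), (1 - 9 * p ^ 2) / 9 := by
    rw [intervalIntegral.integral_add (i1.add i2) i3, intervalIntegral.integral_add i1 i2]
  have hF0 : (∫ p in (-(1 / 3) : ℝ)..(1 / 3), F' f p) = 0 := by
    rw [intervalIntegral.integral_eq_sub_of_hasDerivAt (fun p _ => hasDerivAt_F f p) i1]
    norm_num [St12.F]
  have hc : (∫ p in (-(1 / 3) : ℝ)..(1 / 3), (1 - 9 * p ^ 2) / 9) = 4 / 81 := by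
    have hd : ∀ p ∈ Set.uIcc (-(1/3) : ℝ) (1/3),
        HasDerivAt (fun p : ℝ => p / 9 - p ^ 3 / 3) ((1 - 9 * p ^ 2) / 9) p := by
      intro p _
      have := ((hasDerivAt_id p).div_const 9).fun_sub ((hasDerivAt_pow 3 p).div_const 3)
      refine this.congr_deriv ?_
      ring
    rw [intervalIntegral.integral_eq_sub_of_hasDerivAt hd i3]
    norm_num
  have hp2 : (∫ p in (-(1 / 3) : ℝ)..(1 / 3), p ^ 2) = 2 / 81 := by
    rw [integral_pow]
    norm_num
  have hmid : (∫ p in (-(1 / 3) : ℝ)..(1 / 3), (-p ^ 2 - (G f p - p) ^ 2)) ≤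
      ∫ p in (-(1 / 3) : ℝ)..(1 / 3), 2 * p * (G f p - p) := by
    apply intervalIntegral.integral_mono_on (by norm_num) i4 i2
    intro p _
    nlinarith [sq_nonneg (p + (G f p - p))]
  have i7n : IntervalIntegrable (fun p : ℝ => -p ^ 2) MeasureTheory.volume
      (-(1/3) : ℝ) (1/3) := by
    apply Continuous.intervalIntegrable; fun_prop
  have hmidsplit : (∫ p in (-(1 / 3) : ℝ)..(1 / 3), (-p ^ 2 - (G f p - p) ^ 2)) =
      -(∫ p in (-(1 / 3) : ℝ)..(1 / 3), p ^ 2) -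
        ∫ p in (-(1 / 3) : ℝ)..(1 / 3), (G f p - p) ^ 2 := by
    rw [intervalIntegral.integral_sub i7n i5, intervalIntegral.integral_neg]
  have hJle : (∫ p in (-(1 / 3) : ℝ)..(1 / 3), (G f p - p) ^ 2) ≤
      ∫ p in (-(1 / 3) : ℝ)..(1 / 3),
        ∑ x : Fin m → Bool, (∏ i, (1 + pm1 (x i) * p) / 2) * (f x - p) ^ 2 := by
    apply intervalIntegral.integral_mono_on (by norm_num) i5 i6
    intro p hp
    obtain ⟨h1, h2⟩ := hp
    have hqn : ∀ x : Fin m → Bool, 0 ≤ q x p :=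
      fun x => q_nonneg x (by linarith) (by linarith)
    have hg : G f p - p = ∑ x : Fin m → Bool, q x p * (f x - p) := by
      unfold G
      rw [Finset.sum_congr rfl fun x _ => mul_sub (q x p) (f x) p, Finset.sum_sub_distrib,
        ← Finset.sum_mul, q_sum, one_mul]
    have CS := Finset.sum_sq_le_sum_mul_sum_of_sq_eq_mul (univ : Finset (Fin m → Bool))
      (r := fun x => q x p * (f x - p)) (f := fun x => q x p)
      (g := fun x => q x p * (f x - p) ^ 2)
      (fun x _ => hqn x) (fun x _ => mul_nonneg (hqn x) (sq_nonneg _))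
      (fun x _ => by ring)
    rw [q_sum, one_mul] at CS
    rw [hg]
    exact CS
  have main : (3 / 2 : ℝ) *
      (∫ p in (-(1 / 3) : ℝ)..(1 / 3),
        ∑ x : Fin m → Bool,
          (∏ i, (1 + pm1 (x i) * p) / 2) *
            ((1 - 9 * p ^ 2) / (9 - 9 * p ^ 2) * (f x - p) * (∑ i, (pm1 (x i) - p)))) ≥
      1 / 27 - ε := by
    rw [hIS, hsplit, hF0, hc]
    rw [hmidsplit, hp2] at hmid
    linarith
  exact ⟨main, fun h54 => le_trans (by linarith) main⟩


end
end
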